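/- arXiv:2012.07780 — 5 statements merged into one kernel-verified Lean document; each statement's English description precedes it below -/
import Mathlib

section
/- Let (K, ν) be a valued field and let μ be an extension of ν to K[X]. For a monic polynomial Q ∈ K[X] of positive degree, the truncation map μ_Q defined on Q-expansions f = f_0 + f_1 Q + ... + f_n Q^n (with deg f_i < deg Q) by μ_Q(f) = min_i μ(f_i Q^i) satisfies the ultrametric inequality: μ_Q(f + g) ≥ min(μ_Q(f), μ_Q(g)) for all f, g ∈ K[X]. -/
open Polynomial

/-- An additive (Krull) valuation with values in `Γ ∪ {∞}`. -/
structure IsValAdd {R : Type*} [CommRing R] {Γ : Type*} [AddCommGroup Γ] [LinearOrder Γ] [IsOrderedAddMonoid Γ]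
    (v : R → WithTop Γ) : Prop where
  map_mul : ∀ a b, v (a * b) = v a + v b
  map_add : ∀ a b, min (v a) (v b) ≤ v (a + b)
  map_one : v 1 = 0
  map_zero : v 0 = ⊤
  supp : ∀ a, v a = ⊤ → a = 0

/-- The valuation associated to a pair `(a, δ)`:
`ν_{a,δ}(∑ aᵢ (X - a)ⁱ) = min_i (ν aᵢ + i•δ)`. -/
noncomputable def pairVal {K : Type*} [Field K] {Γ : Type*} [AddCommGroup Γ] [LinearOrder Γ] [IsOrderedAddMonoid Γ]
    (ν : K → WithTop Γ) (a : K) (δ : Γ) (f : K[X]) : WithTop Γ :=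
  (Finset.range (f.natDegree + 1)).inf
    fun i => ν ((Polynomial.taylor a f).coeff i) + ((i • δ : Γ) : WithTop Γ)

/-- The coefficients of the `Q`-expansion of a polynomial, by iterated euclidean division. -/
noncomputable def qCoeff {K : Type*} [Field K] (Q : K[X]) : ℕ → K[X] → K[X]
  | 0, f => f %ₘ Q
  | n + 1, f => qCoeff Q n (f /ₘ Q)

/-- The truncation `μ_Q` of `μ` along `Q` : `μ_Q(f) = min_i μ(fᵢ Qⁱ)` over the
`Q`-expansion `f = ∑ fᵢ Qⁱ`. -/
noncomputable def trunc {K : Type*} [Field K] {Γ : Type*} [AddCommGroup Γ] [LinearOrder Γ] [IsOrderedAddMonoid Γ]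
    (μ : K[X] → WithTop Γ) (Q : K[X]) (f : K[X]) : WithTop Γ :=
  (Finset.range (f.natDegree + 1)).inf fun i => μ (qCoeff Q i f * Q ^ i)

/-- `ε_μ(f) < ε_μ(Q)`, stated in cross-multiplied form (valid in the divisible hull). -/
def EpsLt {K : Type*} [Field K] {Γ : Type*} [AddCommGroup Γ] [LinearOrder Γ] [IsOrderedAddMonoid Γ]
    (μ : K[X] → WithTop Γ) (f Q : K[X]) : Prop :=
  ∃ j, 1 ≤ j ∧ μ (hasseDeriv j Q) ≠ ⊤ ∧
    ∀ i, 1 ≤ i → j • μ f + i • μ (hasseDeriv j Q) < i • μ Q + j • μ (hasseDeriv i f)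

/-- `ε_{μ₁}(f) ≤ ε_{μ₂}(g)`, stated in cross-multiplied form. -/
def EpsLE {K L : Type*} [Field K] [Field L] {Γ : Type*} [AddCommGroup Γ] [LinearOrder Γ] [IsOrderedAddMonoid Γ]
    (μ₁ : K[X] → WithTop Γ) (f : K[X]) (μ₂ : L[X] → WithTop Γ) (g : L[X]) : Prop :=
  ∀ i, 1 ≤ i → ∃ j, 1 ≤ j ∧
    j • μ₁ f + i • μ₂ (hasseDeriv j g) ≤ i • μ₂ g + j • μ₁ (hasseDeriv i f)

/-- `Q` is an abstract key polynomial for `μ`. -/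
def IsABKP {K : Type*} [Field K] {Γ : Type*} [AddCommGroup Γ] [LinearOrder Γ] [IsOrderedAddMonoid Γ]
    (μ : K[X] → WithTop Γ) (Q : K[X]) : Prop :=
  Q.Monic ∧ ∀ f : K[X], f ≠ 0 → f.degree < Q.degree → EpsLt μ f Q


lemma add_divByMonic' {K : Type*} [Field K] {Q : K[X]} (hQ : Q.Monic) (f g : K[X]) :
    (f + g) /ₘ Q = f /ₘ Q + g /ₘ Q :=
  (div_modByMonic_unique (f /ₘ Q + g /ₘ Q) (f %ₘ Q + g %ₘ Q) hQ
    ⟨by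
      linear_combination modByMonic_add_div f Q + modByMonic_add_div g Q,
      (degree_add_le _ _).trans_lt
        (max_lt (degree_modByMonic_lt _ hQ) (degree_modByMonic_lt _ hQ))⟩).1

lemma qCoeff_add' {K : Type*} [Field K] {Q : K[X]} (hQ : Q.Monic) (n : ℕ) (f g : K[X]) :
    qCoeff Q n (f + g) = qCoeff Q n f + qCoeff Q n g := by
  induction n generalizing f g with
  | zero => simp [qCoeff, add_modByMonic]
  | succ n ih => simp only [qCoeff, add_divByMonic' hQ, ih]

lemma qCoeff_eq_zero' {K : Type*} [Field K] {Q : K[X]} (hQ : Q.Monic) (hdeg : 0 < Q.natDegree)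
    (n : ℕ) (f : K[X]) (h : f.natDegree < n) : qCoeff Q n f = 0 := by
  induction n generalizing f with
  | zero => omega
  | succ n ih =>
    show qCoeff Q n (f /ₘ Q) = 0
    rcases Nat.eq_zero_or_pos n with rfl | hn
    · have hf : f /ₘ Q = 0 := by
        rw [divByMonic_eq_zero_iff hQ]
        calc f.degree ≤ (f.natDegree : WithBot ℕ) := degree_le_natDegree
          _ < Q.degree := by
            rw [degree_eq_natDegree hQ.ne_zero]
            exact_mod_cast by omega
      simp [hf, qCoeff]
    · apply ih
      rw [natDegree_divByMonic f hQ]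
      omega

lemma trunc_eq_inf' {K Γ : Type*} [Field K] [AddCommGroup Γ] [LinearOrder Γ] [IsOrderedAddMonoid Γ]
    {μ : K[X] → WithTop Γ} (hμ : IsValAdd μ) {Q : K[X]} (hQ : Q.Monic)
    (hdeg : 0 < Q.natDegree) (f : K[X]) (N : ℕ) (hN : f.natDegree ≤ N) :
    trunc μ Q f = (Finset.range (N + 1)).inf fun i => μ (qCoeff Q i f * Q ^ i) := by
  apply le_antisymm
  · apply Finset.le_inf
    intro i hi
    rcases le_or_gt i f.natDegree with h | h
    · exact Finset.inf_le (Finset.mem_range.mpr (by omega))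
    · rw [qCoeff_eq_zero' hQ hdeg i f h, zero_mul, hμ.map_zero]
      exact le_top
  · exact Finset.inf_mono (Finset.range_subset_range.mpr (by omega))

/-- the truncation map `μ_Q` satisfies the ultrametric inequality. -/
theorem truncation_ultrametric {K Γ : Type*} [Field K] [AddCommGroup Γ] [LinearOrder Γ] [IsOrderedAddMonoid Γ]
    (ν : K → WithTop Γ) (μ : Polynomial K → WithTop Γ)
    (hν : IsValAdd ν) (hμ : IsValAdd μ) (hext : ∀ c : K, μ (Polynomial.C c) = ν c)
    (Q : Polynomial K) (hQ : Q.Monic) (hdeg : 0 < Q.natDegree) (f g : Polynomial K) :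
    min (trunc μ Q f) (trunc μ Q g) ≤ trunc μ Q (f + g) := by
  set N := max (f + g).natDegree (max f.natDegree g.natDegree) with hN
  rw [trunc_eq_inf' hμ hQ hdeg (f + g) N (le_max_left _ _),
    trunc_eq_inf' hμ hQ hdeg f N (le_trans (le_max_left _ _) (le_max_right _ _)),
    trunc_eq_inf' hμ hQ hdeg g N (le_trans (le_max_right _ _) (le_max_right _ _))]
  apply Finset.le_inf
  intro i hi
  rw [qCoeff_add' hQ, add_mul]
  exact le_trans (min_le_min (Finset.inf_le hi) (Finset.inf_le hi)) (hμ.map_add _ _)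
end

section
/- Let (K̄, ν̄) be an algebraically closed valued field. Two pairs (a, δ) and (a', δ') with a, a' ∈ K̄ and δ, δ' in the value group define the same valuation ν̄_{a,δ} = ν̄_{a',δ'} on K̄[X] if and only if δ = δ' and ν̄(a - a') ≥ δ. -/
open Polynomial

section aux
variable {K : Type*} [Field K] {Γ : Type*} [AddCommGroup Γ] [LinearOrder Γ] [IsOrderedAddMonoid Γ]
variable {ν : K → WithTop Γ}

lemma val_neg_one (hν : IsValAdd ν) : ν (-1) = 0 := by
  have h := hν.map_mul (-1) (-1)
  rw [neg_mul_neg, one_mul, hν.map_one] at h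
  cases hc : ν (-1) with
  | top => rw [hc] at h; simp at h
  | coe g =>
    rw [hc] at h
    have hg : g + g = 0 := by exact_mod_cast h.symm
    have : g = 0 := by
      rcases lt_trichotomy g 0 with h' | h' | h'
      · exact absurd hg (by have := add_lt_add h' h'; simpa using this.ne)
      · exact h'
      · exact absurd hg (by have := add_lt_add h' h'; simpa using this.ne')
    simp [this]

lemma val_neg (hν : IsValAdd ν) (x : K) : ν (-x) = ν x := by
  have := hν.map_mul (-1) x
  rw [neg_one_mul, val_neg_one hν, zero_add] at this
  exact this

lemma val_pow (hν : IsValAdd ν) (x : K) (n : ℕ) : ν (x ^ n) = n • ν x := by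
  induction n with
  | zero => simpa using hν.map_one
  | succ n ih => rw [pow_succ, hν.map_mul, ih, succ_nsmul]

lemma val_natCast_nonneg (hν : IsValAdd ν) (n : ℕ) : 0 ≤ ν (n : K) := by
  induction n with
  | zero => simp [hν.map_zero]
  | succ n ih =>
    push_cast
    refine le_trans ?_ (hν.map_add n 1)
    rw [hν.map_one]
    exact le_min ih le_rfl

lemma val_sum (hν : IsValAdd ν) {ι : Type*} (s : Finset ι) (f : ι → K) :
    s.inf (fun i => ν (f i)) ≤ ν (∑ i ∈ s, f i) := by
  induction s using Finset.cons_induction with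
  | empty => simp [hν.map_zero]
  | cons a s ha ih =>
    rw [Finset.sum_cons, Finset.inf_cons]
    exact le_trans (min_le_min le_rfl ih) (hν.map_add _ _)

end aux

section key
variable {K : Type*} [Field K] {Γ : Type*} [AddCommGroup Γ] [LinearOrder Γ] [IsOrderedAddMonoid Γ]
variable {ν : K → WithTop Γ}

lemma key (hν : IsValAdd ν) (c : K) {δ : Γ} (hc : (δ : WithTop Γ) ≤ ν c) (g : K[X]) (j : ℕ) :
    (Finset.range (g.natDegree + 1)).inf
        (fun i => ν (g.coeff i) + ((i • δ : Γ) : WithTop Γ))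
      ≤ ν (((taylor c) g).coeff j) + ((j • δ : Γ) : WithTop Γ) := by
  set N := g.natDegree with hN
  have hLHS : ∀ m : ℕ,
      (Finset.range (N + 1)).inf (fun i => ν (g.coeff i) + ((i • δ : Γ) : WithTop Γ))
        ≤ ν (g.coeff m) + ((m • δ : Γ) : WithTop Γ) := by
    intro m
    by_cases hm : m ≤ N
    · exact Finset.inf_le (Finset.mem_range.mpr (by omega))
    · rw [coeff_eq_zero_of_natDegree_lt (by omega), hν.map_zero, top_add]
      exact le_top
  by_cases hj : N < j
  · have h0 : ((taylor c) g).coeff j = 0 :=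
      coeff_eq_zero_of_natDegree_lt (by rwa [natDegree_taylor])
    rw [h0, hν.map_zero, top_add]; exact le_top
  push_neg at hj
  rw [taylor_coeff]
  have hdeg : ((hasseDeriv j) g).natDegree < N + 1 :=
    lt_of_le_of_lt (le_trans (natDegree_hasseDeriv_le g j) (Nat.sub_le _ _)) (Nat.lt_succ_self _)
  rw [eval_eq_sum_range' hdeg]
  -- bound ν of sum
  have hsum := val_sum hν (Finset.range (N + 1))
    (fun i => ((hasseDeriv j) g).coeff i * c ^ i)
  obtain ⟨i₀, hi₀mem, hi₀⟩ := Finset.exists_mem_eq_inf (Finset.range (N + 1))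
    (Finset.nonempty_range_iff.mpr (Nat.succ_ne_zero _))
    (fun i => ν (((hasseDeriv j) g).coeff i * c ^ i))
  refine le_trans ?_ (add_le_add_left hsum _)
  rw [hi₀]
  -- now bound the single term
  rw [hasseDeriv_coeff, hν.map_mul, hν.map_mul, val_pow hν]
  have h1 : (0 : WithTop Γ) ≤ ν ((((i₀ + j).choose j : ℕ)) : K) := val_natCast_nonneg hν _
  have h2 : ((i₀ • δ : Γ) : WithTop Γ) ≤ i₀ • ν c := by
    rw [show ((i₀ • δ : Γ) : WithTop Γ) = i₀ • (δ : WithTop Γ) by exact_mod_cast rfl]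
    exact nsmul_le_nsmul_right hc i₀
  calc (Finset.range (N + 1)).inf (fun i => ν (g.coeff i) + ((i • δ : Γ) : WithTop Γ))
      ≤ ν (g.coeff (i₀ + j)) + (((i₀ + j) • δ : Γ) : WithTop Γ) := hLHS _
    _ = ν (g.coeff (i₀ + j)) + (((i₀ • δ : Γ) : WithTop Γ) + ((j • δ : Γ) : WithTop Γ)) := by
        rw [← WithTop.coe_add, ← add_nsmul]
    _ = (ν (g.coeff (i₀ + j)) + ((i₀ • δ : Γ) : WithTop Γ)) + ((j • δ : Γ) : WithTop Γ) :=
        (add_assoc _ _ _).symm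
    _ ≤ (ν (g.coeff (i₀ + j)) + i₀ • ν c) + ((j • δ : Γ) : WithTop Γ) :=
        add_le_add_left (add_le_add_right h2 _) _
    _ = (0 + (ν (g.coeff (i₀ + j)) + i₀ • ν c)) + ((j • δ : Γ) : WithTop Γ) := by
        rw [zero_add]
    _ ≤ (ν (((i₀ + j).choose j : ℕ) : K) + (ν (g.coeff (i₀ + j)) + i₀ • ν c))
          + ((j • δ : Γ) : WithTop Γ) :=
        add_le_add_left (add_le_add_left h1 _) _
    _ = ((ν (((i₀ + j).choose j : ℕ) : K) + ν (g.coeff (i₀ + j))) + i₀ • ν c)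
          + ((j • δ : Γ) : WithTop Γ) := by abel

end key

section main
variable {K : Type*} [Field K] {Γ : Type*} [AddCommGroup Γ] [LinearOrder Γ] [IsOrderedAddMonoid Γ]
variable {ν : K → WithTop Γ}

lemma pairVal_le (hν : IsValAdd ν) {a a' : K} {δ : Γ}
    (hac : (δ : WithTop Γ) ≤ ν (a - a')) (f : K[X]) :
    pairVal ν a δ f ≤ pairVal ν a' δ f := by
  unfold pairVal
  apply Finset.le_inf
  intro j _
  have h1 : (taylor a') f = (taylor (a' - a)) ((taylor a) f) := by
    rw [taylor_taylor, sub_add_cancel]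
  have hc : (δ : WithTop Γ) ≤ ν (a' - a) := by
    rw [← val_neg hν, neg_sub] at hac; exact hac
  rw [h1]
  have := key hν (a' - a) hc ((taylor a) f) j
  rwa [natDegree_taylor] at this

lemma pairVal_X_sub_C (hν : IsValAdd ν) (a b : K) (δ : Γ) :
    pairVal ν a δ (X - C b) = min (ν (a - b)) (δ : WithTop Γ) := by
  have ht : (taylor a) (X - C b) = X + C (a - b) := by
    rw [map_sub, taylor_X, taylor_C, C_sub]; ring
  have hnd : (X - C b).natDegree = 1 := natDegree_X_sub_C b
  rw [pairVal, hnd]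
  have hr : Finset.range 2 = {0, 1} := rfl
  rw [hr, Finset.inf_insert, Finset.inf_singleton, ht]
  simp [coeff_add, coeff_X_zero, coeff_X_one, coeff_C, hν.map_one, min_comm]
end main


/-- two pairs define the same valuation iff `δ = δ'` and `ν̄(a - a') ≥ δ`. -/
theorem pairs_same_valuation_iff {K Γ : Type*} [Field K] [IsAlgClosed K]
    [AddCommGroup Γ] [LinearOrder Γ] [IsOrderedAddMonoid Γ]
    (ν : K → WithTop Γ) (hν : IsValAdd ν) (a a' : K) (δ δ' : Γ)
    (hδ : ∃ b : K, b ≠ 0 ∧ ν b = (δ : WithTop Γ))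
    (hδ' : ∃ b : K, b ≠ 0 ∧ ν b = (δ' : WithTop Γ)) :
    (∀ f : Polynomial K, pairVal ν a δ f = pairVal ν a' δ' f) ↔
      (δ = δ' ∧ (δ : WithTop Γ) ≤ ν (a - a')) := by
  constructor
  · intro h
    have h1 := h (X - C a')
    have h2 := h (X - C a)
    rw [pairVal_X_sub_C hν, pairVal_X_sub_C hν] at h1 h2
    simp only [sub_self, hν.map_zero, min_top_left, top_le_iff, le_top, min_eq_right,
      min_top_right, min_eq_left] at h1 h2
    -- h1 : min (ν (a - a')) ↑δ = ↑δ'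
    -- h2 : ↑δ = min (ν (a' - a)) ↑δ'
    have hba : (δ' : WithTop Γ) ≤ (δ : WithTop Γ) := h1 ▸ min_le_right _ _
    have hab : (δ : WithTop Γ) ≤ (δ' : WithTop Γ) := h2 ▸ min_le_right _ _
    have heq : δ = δ' := by exact_mod_cast le_antisymm hab hba
    refine ⟨heq, ?_⟩
    have : (δ' : WithTop Γ) ≤ ν (a - a') := h1 ▸ min_le_left _ _
    rw [heq]
    exact this
  · rintro ⟨rfl, hle⟩ f
    have hle' : (δ : WithTop Γ) ≤ ν (a' - a) := by
      rw [← val_neg hν, neg_sub] at hle; exact hle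
    exact le_antisymm (pairVal_le hν hle f) (pairVal_le hν hle' f)
end

section
/- Let (F, V) be a valued field and p(T) = c·∏_{k=1}^N (T - c_k) = Σ_{l=0}^N b_l T^l a polynomial with all roots c_k in F. If ζ is a slope of the Newton polygon of the points {(l, V(b_l)) : l = 0,...,N} of length ℓ, then exactly ℓ of the roots c_k satisfy V(c_k) = ζ. -/
open Polynomial

namespace NPaux

variable {F : Type*} [Field F] {Γ : Type*} [AddCommGroup Γ] [LinearOrder Γ] [IsOrderedAddMonoid Γ] {V : F → WithTop Γ}

lemma vneg (hV : IsValAdd V) (x : F) : V (-x) = V x := by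
  have h1 : V (-1 : F) = 0 := by
    have h := hV.map_mul (-1) (-1)
    rw [neg_mul_neg, one_mul, hV.map_one] at h
    cases hv : V (-1 : F) with
    | top => rw [hv] at h; simp at h
    | coe g =>
      rw [hv, ← WithTop.coe_add] at h
      have hg : g + g = 0 := by exact_mod_cast h.symm
      have : g = 0 := by
        rcases lt_trichotomy g 0 with h1 | h1 | h1
        · have := add_lt_add h1 h1
          simp only [add_zero] at this
          exact absurd hg this.ne
        · exact h1
        · have := add_lt_add h1 h1
          simp only [add_zero] at this
          exact absurd hg this.ne'
      simp [this]
  have h := hV.map_mul (-1) x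
  rw [neg_one_mul] at h
  rw [h, h1, zero_add]

lemma vprod (hV : IsValAdd V) {ι : Type*} (s : Finset ι) (f : ι → F) :
    V (∏ i ∈ s, f i) = ∑ i ∈ s, V (f i) := by
  induction s using Finset.cons_induction with
  | empty => simpa using hV.map_one
  | cons a s ha ih => rw [Finset.prod_cons, Finset.sum_cons, hV.map_mul, ih]

lemma vsum_ge (hV : IsValAdd V) {ι : Type*} (s : Finset ι) (f : ι → F) :
    (s.inf fun i => V (f i)) ≤ V (∑ i ∈ s, f i) := by
  induction s using Finset.cons_induction with
  | empty => simp [hV.map_zero]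
  | cons a s ha ih =>
    rw [Finset.sum_cons, Finset.inf_cons]
    exact le_trans (min_le_min le_rfl ih) (hV.map_add _ _)

lemma vadd_eq (hV : IsValAdd V) {x y : F} (h : V x < V y) : V (x + y) = V x := by
  have h1 : V x ≤ V (x + y) := le_trans (le_min le_rfl h.le) (hV.map_add x y)
  have h2 := hV.map_add (x + y) (-y)
  rw [add_neg_cancel_right, vneg hV] at h2
  rcases min_le_iff.1 h2 with h3 | h3
  · exact le_antisymm h3 h1
  · exact absurd h3 (not_le.2 h)

lemma vsum_eq (hV : IsValAdd V) {ι : Type*} [DecidableEq ι] {s : Finset ι} (f : ι → F) {i₀ : ι}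
    (h0 : i₀ ∈ s) (hmin : ∀ j ∈ s, j ≠ i₀ → V (f i₀) < V (f j)) :
    V (∑ i ∈ s, f i) = V (f i₀) := by
  rw [← Finset.sum_erase_add s f h0, add_comm]
  rcases (s.erase i₀).eq_empty_or_nonempty with he | hne
  · rw [he]; simp
  · apply vadd_eq hV
    obtain ⟨j, hj, hjeq⟩ := Finset.exists_mem_eq_inf (s.erase i₀) hne (fun i => V (f i))
    calc V (f i₀) < (s.erase i₀).inf (fun i => V (f i)) := by
          rw [hjeq]; exact hmin j (Finset.mem_of_mem_erase hj) (Finset.ne_of_mem_erase hj)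
      _ ≤ V (∑ i ∈ s.erase i₀, f i) := vsum_ge hV _ _

variable {ι : Type*}

lemma sum_le_smul {s : Finset ι} {f : ι → WithTop Γ} {ζ : Γ}
    (h : ∀ i ∈ s, f i ≤ (ζ : WithTop Γ)) :
    ∑ i ∈ s, f i ≤ ((s.card • ζ : Γ) : WithTop Γ) := by
  rw [WithTop.coe_nsmul, ← Finset.sum_const]
  exact Finset.sum_le_sum h

lemma smul_le_sum {s : Finset ι} {f : ι → WithTop Γ} {ζ : Γ}
    (h : ∀ i ∈ s, (ζ : WithTop Γ) ≤ f i) :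
    ((s.card • ζ : Γ) : WithTop Γ) ≤ ∑ i ∈ s, f i := by
  rw [WithTop.coe_nsmul, ← Finset.sum_const]
  exact Finset.sum_le_sum h

lemma sum_lt_smul {s : Finset ι} {f : ι → WithTop Γ} {ζ : Γ} (hs : s.Nonempty)
    (h : ∀ i ∈ s, f i < (ζ : WithTop Γ)) :
    ∑ i ∈ s, f i < ((s.card • ζ : Γ) : WithTop Γ) := by
  induction s using Finset.cons_induction with
  | empty => exact absurd hs (by simp)
  | cons a s ha ih =>
    rw [Finset.sum_cons, Finset.card_cons, succ_nsmul, WithTop.coe_add]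
    have h2 : f a < (ζ : WithTop Γ) := h a (Finset.mem_cons_self a s)
    rcases s.eq_empty_or_nonempty with he | hne
    · subst he
      simpa using h2
    · have h1 := ih hne (fun i hi => h i (Finset.mem_cons.2 (Or.inr hi)))
      calc f a + ∑ i ∈ s, f i < f a + ((s.card • ζ : Γ) : WithTop Γ) :=
            WithTop.add_lt_add_left (ne_top_of_lt h2) h1
        _ < ((s.card • ζ : Γ) : WithTop Γ) + (ζ : WithTop Γ) := by
            rw [add_comm]
            exact WithTop.add_lt_add_left WithTop.coe_ne_top h2

lemma smul_lt_sum {s : Finset ι} {f : ι → WithTop Γ} {ζ : Γ} (hs : s.Nonempty)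
    (h : ∀ i ∈ s, (ζ : WithTop Γ) < f i) :
    ((s.card • ζ : Γ) : WithTop Γ) < ∑ i ∈ s, f i := by
  induction s using Finset.cons_induction with
  | empty => exact absurd hs (by simp)
  | cons a s ha ih =>
    rw [Finset.sum_cons, Finset.card_cons, succ_nsmul, WithTop.coe_add]
    have h2 : (ζ : WithTop Γ) < f a := h a (Finset.mem_cons_self a s)
    rcases s.eq_empty_or_nonempty with he | hne
    · subst he
      simpa using h2
    · have h1 := ih hne (fun i hi => h i (Finset.mem_cons.2 (Or.inr hi)))
      calc ((s.card • ζ : Γ) : WithTop Γ) + (ζ : WithTop Γ)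
          < (∑ i ∈ s, f i) + (ζ : WithTop Γ) :=
            WithTop.add_lt_add_right WithTop.coe_ne_top h1
        _ ≤ (∑ i ∈ s, f i) + f a := add_le_add_right h2.le _
        _ = f a + ∑ i ∈ s, f i := add_comm _ _

section Compare
variable [DecidableEq ι] {t : ι → WithTop Γ} {ζ : Γ}

lemma sum_split (A T : Finset ι) (t : ι → WithTop Γ) :
    ∑ i ∈ A ∩ T, t i + ∑ i ∈ A \ T, t i = ∑ i ∈ A, t i := by
  rw [← Finset.sdiff_sdiff_self_left A T, Finset.sum_sdiff Finset.sdiff_subset]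

lemma key_lt_A {A T : Finset ι} (hA : ∀ i ∈ A, t i < (ζ : WithTop Γ))
    (hA' : ∀ i ∉ A, (ζ : WithTop Γ) ≤ t i) (hcard : T.card = A.card) (hne : T ≠ A) :
    ∑ i ∈ A, t i < ∑ i ∈ T, t i := by
  have hAT : (A \ T).Nonempty := by
    rw [Finset.sdiff_nonempty]
    intro hsub
    exact hne (Finset.eq_of_subset_of_card_le hsub hcard.le).symm
  have hntA : (T \ A).card = (A \ T).card := by
    have h1 := Finset.card_sdiff_add_card_inter A T
    have h2 := Finset.card_sdiff_add_card_inter T A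
    rw [Finset.inter_comm] at h2
    omega
  have hfin : ∑ i ∈ A ∩ T, t i ≠ ⊤ :=
    ne_top_of_le_ne_top WithTop.coe_ne_top
      (sum_le_smul fun i hi => (hA i (Finset.mem_of_mem_inter_left hi)).le)
  rw [← sum_split A T t, ← sum_split T A t, Finset.inter_comm T A]
  calc ∑ i ∈ A ∩ T, t i + ∑ i ∈ A \ T, t i
      < ∑ i ∈ A ∩ T, t i + (((A \ T).card • ζ : Γ) : WithTop Γ) :=
        WithTop.add_lt_add_left hfin
          (sum_lt_smul hAT fun i hi => hA i (Finset.mem_sdiff.1 hi).1)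
    _ ≤ ∑ i ∈ A ∩ T, t i + ∑ i ∈ T \ A, t i := by
        rw [← hntA]
        exact add_le_add_right (smul_le_sum fun i hi => hA' i (Finset.mem_sdiff.1 hi).2) _

lemma key_lt_AB {A T : Finset ι} (hA : ∀ i ∈ A, t i ≤ (ζ : WithTop Γ))
    (hA' : ∀ i ∉ A, (ζ : WithTop Γ) < t i) (hcard : T.card = A.card) (hne : T ≠ A) :
    ∑ i ∈ A, t i < ∑ i ∈ T, t i := by
  have hTA : (T \ A).Nonempty := by
    rw [Finset.sdiff_nonempty]
    intro hsub
    exact hne (Finset.eq_of_subset_of_card_le hsub hcard.ge)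
  have hntA : (A \ T).card = (T \ A).card := by
    have h1 := Finset.card_sdiff_add_card_inter A T
    have h2 := Finset.card_sdiff_add_card_inter T A
    rw [Finset.inter_comm] at h2
    omega
  have hfin : ∑ i ∈ A ∩ T, t i ≠ ⊤ :=
    ne_top_of_le_ne_top WithTop.coe_ne_top
      (sum_le_smul fun i hi => hA i (Finset.mem_of_mem_inter_left hi))
  rw [← sum_split A T t, ← sum_split T A t, Finset.inter_comm T A]
  calc ∑ i ∈ A ∩ T, t i + ∑ i ∈ A \ T, t i
      ≤ ∑ i ∈ A ∩ T, t i + (((A \ T).card • ζ : Γ) : WithTop Γ) :=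
        add_le_add_right (sum_le_smul fun i hi => hA i (Finset.mem_sdiff.1 hi).1) _
    _ < ∑ i ∈ A ∩ T, t i + ∑ i ∈ T \ A, t i := by
        rw [hntA]
        exact WithTop.add_lt_add_left hfin
          (smul_lt_sum hTA fun i hi => hA' i (Finset.mem_sdiff.1 hi).2)

lemma card_sdiff_eq {A T : Finset ι} {N : ℕ} (hAN : A.card ≤ N) (hTN : T.card ≤ N) :
    (A \ T).card + (N - A.card) = (T \ A).card + (N - T.card) := by
  have h1 := Finset.card_sdiff_add_card_inter A T
  have h2 := Finset.card_sdiff_add_card_inter T A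
  rw [Finset.inter_comm] at h2
  omega

lemma key_le {A T : Finset ι} {N : ℕ} (hA : ∀ i ∈ A, t i < (ζ : WithTop Γ))
    (hA' : ∀ i ∉ A, (ζ : WithTop Γ) ≤ t i) (hAN : A.card ≤ N) (hTN : T.card ≤ N) :
    ∑ i ∈ A, t i + (((N - A.card) • ζ : Γ) : WithTop Γ)
      ≤ ∑ i ∈ T, t i + (((N - T.card) • ζ : Γ) : WithTop Γ) := by
  rw [← sum_split A T t, ← sum_split T A t, Finset.inter_comm T A, add_assoc, add_assoc]
  refine add_le_add_right ?_ _
  calc ∑ i ∈ A \ T, t i + (((N - A.card) • ζ : Γ) : WithTop Γ)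
      ≤ (((A \ T).card • ζ : Γ) : WithTop Γ) + (((N - A.card) • ζ : Γ) : WithTop Γ) :=
        add_le_add_left (sum_le_smul fun i hi => (hA i (Finset.mem_sdiff.1 hi).1).le) _
    _ = ((((A \ T).card + (N - A.card)) • ζ : Γ) : WithTop Γ) := by
        rw [← WithTop.coe_add, ← add_nsmul]
    _ = ((((T \ A).card + (N - T.card)) • ζ : Γ) : WithTop Γ) := by
        rw [card_sdiff_eq hAN hTN]
    _ = (((T \ A).card • ζ : Γ) : WithTop Γ) + (((N - T.card) • ζ : Γ) : WithTop Γ) := by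
        rw [← WithTop.coe_add, ← add_nsmul]
    _ ≤ ∑ i ∈ T \ A, t i + (((N - T.card) • ζ : Γ) : WithTop Γ) :=
        add_le_add_left (smul_le_sum fun i hi => hA' i (Finset.mem_sdiff.1 hi).2) _

lemma key_lt_left {A T : Finset ι} {N : ℕ} (hA : ∀ i ∈ A, t i < (ζ : WithTop Γ))
    (hA' : ∀ i ∉ A, (ζ : WithTop Γ) ≤ t i) (hAN : A.card ≤ N) (hTN : T.card ≤ N)
    (hlt : T.card < A.card) :
    ∑ i ∈ A, t i + (((N - A.card) • ζ : Γ) : WithTop Γ)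
      < ∑ i ∈ T, t i + (((N - T.card) • ζ : Γ) : WithTop Γ) := by
  have hAT : (A \ T).Nonempty := by
    rw [Finset.sdiff_nonempty]
    intro hsub
    exact absurd (Finset.card_le_card hsub) (by omega)
  have hfin : ∑ i ∈ A ∩ T, t i ≠ ⊤ :=
    ne_top_of_le_ne_top WithTop.coe_ne_top
      (sum_le_smul fun i hi => (hA i (Finset.mem_of_mem_inter_left hi)).le)
  rw [← sum_split A T t, ← sum_split T A t, Finset.inter_comm T A, add_assoc, add_assoc]
  refine WithTop.add_lt_add_left hfin ?_
  calc ∑ i ∈ A \ T, t i + (((N - A.card) • ζ : Γ) : WithTop Γ)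
      < (((A \ T).card • ζ : Γ) : WithTop Γ) + (((N - A.card) • ζ : Γ) : WithTop Γ) :=
        WithTop.add_lt_add_right WithTop.coe_ne_top
          (sum_lt_smul hAT fun i hi => hA i (Finset.mem_sdiff.1 hi).1)
    _ = ((((A \ T).card + (N - A.card)) • ζ : Γ) : WithTop Γ) := by
        rw [← WithTop.coe_add, ← add_nsmul]
    _ = ((((T \ A).card + (N - T.card)) • ζ : Γ) : WithTop Γ) := by
        rw [card_sdiff_eq hAN hTN]
    _ = (((T \ A).card • ζ : Γ) : WithTop Γ) + (((N - T.card) • ζ : Γ) : WithTop Γ) := by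
        rw [← WithTop.coe_add, ← add_nsmul]
    _ ≤ ∑ i ∈ T \ A, t i + (((N - T.card) • ζ : Γ) : WithTop Γ) :=
        add_le_add_left (smul_le_sum fun i hi => hA' i (Finset.mem_sdiff.1 hi).2) _

lemma key_lt_right {A T : Finset ι} {N : ℕ} (hA : ∀ i ∈ A, t i ≤ (ζ : WithTop Γ))
    (hA' : ∀ i ∉ A, (ζ : WithTop Γ) < t i) (hAN : A.card ≤ N) (hTN : T.card ≤ N)
    (hlt : A.card < T.card) :
    ∑ i ∈ A, t i + (((N - A.card) • ζ : Γ) : WithTop Γ)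
      < ∑ i ∈ T, t i + (((N - T.card) • ζ : Γ) : WithTop Γ) := by
  have hTA : (T \ A).Nonempty := by
    rw [Finset.sdiff_nonempty]
    intro hsub
    exact absurd (Finset.card_le_card hsub) (by omega)
  have hfin : ∑ i ∈ A ∩ T, t i ≠ ⊤ :=
    ne_top_of_le_ne_top WithTop.coe_ne_top
      (sum_le_smul fun i hi => hA i (Finset.mem_of_mem_inter_left hi))
  rw [← sum_split A T t, ← sum_split T A t, Finset.inter_comm T A, add_assoc, add_assoc]
  refine WithTop.add_lt_add_left hfin ?_
  calc ∑ i ∈ A \ T, t i + (((N - A.card) • ζ : Γ) : WithTop Γ)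
      ≤ (((A \ T).card • ζ : Γ) : WithTop Γ) + (((N - A.card) • ζ : Γ) : WithTop Γ) :=
        add_le_add_left (sum_le_smul fun i hi => hA i (Finset.mem_sdiff.1 hi).1) _
    _ = ((((A \ T).card + (N - A.card)) • ζ : Γ) : WithTop Γ) := by
        rw [← WithTop.coe_add, ← add_nsmul]
    _ = ((((T \ A).card + (N - T.card)) • ζ : Γ) : WithTop Γ) := by
        rw [card_sdiff_eq hAN hTN]
    _ = (((T \ A).card • ζ : Γ) : WithTop Γ) + (((N - T.card) • ζ : Γ) : WithTop Γ) := by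
        rw [← WithTop.coe_add, ← add_nsmul]
    _ < ∑ i ∈ T \ A, t i + (((N - T.card) • ζ : Γ) : WithTop Γ) :=
        WithTop.add_lt_add_right WithTop.coe_ne_top
          (smul_lt_sum hTA fun i hi => hA' i (Finset.mem_sdiff.1 hi).2)

end Compare

end NPaux

/-- if `ζ` is a slope of the Newton polygon of a split polynomial
`p = c ∏ (T - cₖ)`, supported on the face with endpoints of abscissae `a < a'`
(so of length `ℓ = a' - a`), then exactly `ℓ` of the roots have valuation `ζ`. -/
theorem newton_polygon_slope_roots {F Γ : Type*} [Field F] [AddCommGroup Γ] [LinearOrder Γ] [IsOrderedAddMonoid Γ]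
    (V : F → WithTop Γ) (hV : IsValAdd V)
    (N : ℕ) (c : F) (hc : c ≠ 0) (r : Fin N → F)
    (p : Polynomial F) (hp : p = Polynomial.C c * ∏ k, (Polynomial.X - Polynomial.C (r k)))
    (ζ : Γ) (a a' : ℕ) (haa : a < a') (ha'N : a' ≤ N)
    (hfina : V (p.coeff a) ≠ ⊤) (hfina' : V (p.coeff a') ≠ ⊤)
    (heq : V (p.coeff a) + ((a • ζ : Γ) : WithTop Γ)
            = V (p.coeff a') + ((a' • ζ : Γ) : WithTop Γ))
    (hface : ∀ l ≤ N,
      V (p.coeff a) + ((a • ζ : Γ) : WithTop Γ) ≤ V (p.coeff l) + ((l • ζ : Γ) : WithTop Γ))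
    (hstrict : ∀ l ≤ N, l < a ∨ a' < l →
      V (p.coeff a) + ((a • ζ : Γ) : WithTop Γ) < V (p.coeff l) + ((l • ζ : Γ) : WithTop Γ)) :
    Nat.card {k : Fin N // V (r k) = (ζ : WithTop Γ)} = a' - a := by
  classical
  set t : Fin N → WithTop Γ := fun k => V (r k) with ht
  set A : Finset (Fin N) := Finset.univ.filter (fun k => t k < (ζ : WithTop Γ)) with hA
  set AB : Finset (Fin N) := Finset.univ.filter (fun k => t k ≤ (ζ : WithTop Γ)) with hAB
  have hAmem : ∀ i ∈ A, t i < (ζ : WithTop Γ) := fun i hi => (Finset.mem_filter.1 hi).2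
  have hAmem' : ∀ i ∉ A, (ζ : WithTop Γ) ≤ t i := fun i hi =>
    not_lt.1 fun h => hi (Finset.mem_filter.2 ⟨Finset.mem_univ i, h⟩)
  have hABmem : ∀ i ∈ AB, t i ≤ (ζ : WithTop Γ) := fun i hi => (Finset.mem_filter.1 hi).2
  have hABmem' : ∀ i ∉ AB, (ζ : WithTop Γ) < t i := fun i hi =>
    not_le.1 fun h => hi (Finset.mem_filter.2 ⟨Finset.mem_univ i, h⟩)
  have hsub : A ⊆ AB := fun i hi =>
    Finset.mem_filter.2 ⟨Finset.mem_univ i, (Finset.mem_filter.1 hi).2.le⟩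
  have hcardA : A.card ≤ N := by
    simpa using Finset.card_le_univ A
  have hcardAB : AB.card ≤ N := by
    simpa using Finset.card_le_univ AB
  have hcards : A.card ≤ AB.card := Finset.card_le_card hsub
  have hVc : V c ≠ ⊤ := fun h => hc (hV.supp c h)
  have hprodeq : (∏ k : Fin N, (Polynomial.X - Polynomial.C (r k)))
      = ∏ k : Fin N, (Polynomial.X + Polynomial.C (-(r k))) :=
    Finset.prod_congr rfl fun k _ => by rw [map_neg, sub_eq_add_neg]
  have hcoeff : ∀ l, l ≤ N → p.coeff l
      = c * ∑ T ∈ Finset.univ.powersetCard (N - l), ∏ i ∈ T, (-(r i)) := by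
    intro l hl
    rw [hp, coeff_C_mul, hprodeq,
      Finset.prod_X_add_C_coeff _ _ (by simpa using hl), Finset.card_fin]
  have hvterm : ∀ T : Finset (Fin N), V (∏ i ∈ T, (-(r i))) = ∑ i ∈ T, t i := by
    intro T
    rw [NPaux.vprod hV]
    exact Finset.sum_congr rfl fun i _ => NPaux.vneg hV (r i)
  have hWl : ∀ l, l ≤ N → V (p.coeff l)
      = V c + V (∑ T ∈ Finset.univ.powersetCard (N - l), ∏ i ∈ T, (-(r i))) := by
    intro l hl; rw [hcoeff l hl, hV.map_mul]
  set M : WithTop Γ :=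
    V c + (∑ i ∈ A, t i + (((N - A.card) • ζ : Γ) : WithTop Γ)) with hM
  have hABdiff : ∀ i ∈ AB \ A, t i = (ζ : WithTop Γ) := fun i hi => by
    obtain ⟨h1, h2⟩ := Finset.mem_sdiff.1 hi
    exact le_antisymm (hABmem i h1) (hAmem' i h2)
  have hABsum : ∑ i ∈ AB, t i
      = (((AB.card - A.card) • ζ : Γ) : WithTop Γ) + ∑ i ∈ A, t i := by
    rw [← Finset.sum_sdiff hsub]
    congr 1
    calc ∑ i ∈ AB \ A, t i = ∑ _i ∈ AB \ A, (ζ : WithTop Γ) := Finset.sum_congr rfl hABdiff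
      _ = (AB \ A).card • (ζ : WithTop Γ) := Finset.sum_const _
      _ = (((AB.card - A.card) • ζ : Γ) : WithTop Γ) := by
          rw [Finset.card_sdiff_of_subset hsub, WithTop.coe_nsmul]
  have hABeq : ∑ i ∈ A, t i + (((N - A.card) • ζ : Γ) : WithTop Γ)
      = ∑ i ∈ AB, t i + (((N - AB.card) • ζ : Γ) : WithTop Γ) := by
    rw [hABsum, add_comm (((AB.card - A.card) • ζ : Γ) : WithTop Γ) (∑ i ∈ A, t i),
      add_assoc, ← WithTop.coe_add, ← add_nsmul]
    have hq : N - A.card = (AB.card - A.card) + (N - AB.card) := by omega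
    rw [hq]
  have F1 : ∀ l, l ≤ N → M ≤ V (p.coeff l) + ((l • ζ : Γ) : WithTop Γ) := by
    intro l hl
    obtain ⟨T₀, hT₀mem, hT₀inf⟩ := Finset.exists_mem_eq_inf
      (Finset.univ.powersetCard (N - l))
      (Finset.powersetCard_nonempty.2 (by simpa using Nat.sub_le N l))
      (fun T => V (∏ i ∈ T, (-(r i))))
    have hT₀card : T₀.card = N - l := Finset.mem_powersetCard_univ.1 hT₀mem
    have hinf : V (∏ i ∈ T₀, (-(r i)))
        ≤ V (∑ T ∈ Finset.univ.powersetCard (N - l), ∏ i ∈ T, (-(r i))) := by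
      rw [← hT₀inf]; exact NPaux.vsum_ge hV _ _
    have hNl : N - (N - l) = l := by omega
    rw [hM, hWl l hl, add_assoc]
    refine add_le_add_right ?_ _
    calc ∑ i ∈ A, t i + (((N - A.card) • ζ : Γ) : WithTop Γ)
        ≤ ∑ i ∈ T₀, t i + (((N - T₀.card) • ζ : Γ) : WithTop Γ) :=
          NPaux.key_le hAmem hAmem' hcardA (by omega)
      _ = ∑ i ∈ T₀, t i + ((l • ζ : Γ) : WithTop Γ) := by rw [hT₀card, hNl]
      _ ≤ _ := add_le_add_left (by rw [← hvterm T₀]; exact hinf) _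
  have F4 : ∀ l, l ≤ N → (N - l < A.card ∨ AB.card < N - l) →
      M < V (p.coeff l) + ((l • ζ : Γ) : WithTop Γ) := by
    intro l hl hcase
    obtain ⟨T₀, hT₀mem, hT₀inf⟩ := Finset.exists_mem_eq_inf
      (Finset.univ.powersetCard (N - l))
      (Finset.powersetCard_nonempty.2 (by simpa using Nat.sub_le N l))
      (fun T => V (∏ i ∈ T, (-(r i))))
    have hT₀card : T₀.card = N - l := Finset.mem_powersetCard_univ.1 hT₀mem
    have hinf : V (∏ i ∈ T₀, (-(r i)))
        ≤ V (∑ T ∈ Finset.univ.powersetCard (N - l), ∏ i ∈ T, (-(r i))) := by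
      rw [← hT₀inf]; exact NPaux.vsum_ge hV _ _
    have hNl : N - (N - l) = l := by omega
    have hstep : ∑ i ∈ A, t i + (((N - A.card) • ζ : Γ) : WithTop Γ)
        < ∑ i ∈ T₀, t i + (((N - T₀.card) • ζ : Γ) : WithTop Γ) := by
      rcases hcase with h | h
      · exact NPaux.key_lt_left hAmem hAmem' hcardA (by omega) (by omega)
      · rw [hABeq]
        exact NPaux.key_lt_right hABmem hABmem' hcardAB (by omega) (by omega)
    rw [hM, hWl l hl, add_assoc]
    refine WithTop.add_lt_add_left hVc ?_
    calc ∑ i ∈ A, t i + (((N - A.card) • ζ : Γ) : WithTop Γ)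
        < ∑ i ∈ T₀, t i + (((N - T₀.card) • ζ : Γ) : WithTop Γ) := hstep
      _ = ∑ i ∈ T₀, t i + ((l • ζ : Γ) : WithTop Γ) := by rw [hT₀card, hNl]
      _ ≤ _ := add_le_add_left (by rw [← hvterm T₀]; exact hinf) _
  have hNA : N - (N - A.card) = A.card := by omega
  have hNAB : N - (N - AB.card) = AB.card := by omega
  have F2 : V (p.coeff (N - A.card)) + (((N - A.card) • ζ : Γ) : WithTop Γ) = M := by
    have hAin : A ∈ Finset.univ.powersetCard A.card := Finset.mem_powersetCard_univ.2 rfl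
    have hmin : ∀ T ∈ Finset.univ.powersetCard A.card, T ≠ A →
        V (∏ i ∈ A, (-(r i))) < V (∏ i ∈ T, (-(r i))) := by
      intro T hT hne
      rw [hvterm, hvterm]
      exact NPaux.key_lt_A hAmem hAmem' (Finset.mem_powersetCard_univ.1 hT) hne
    rw [hWl (N - A.card) (by omega), hNA,
      NPaux.vsum_eq hV (fun T => ∏ i ∈ T, (-(r i))) hAin hmin, hvterm A, hM, add_assoc]
  have F3 : V (p.coeff (N - AB.card)) + (((N - AB.card) • ζ : Γ) : WithTop Γ) = M := by
    have hABin : AB ∈ Finset.univ.powersetCard AB.card := Finset.mem_powersetCard_univ.2 rfl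
    have hmin : ∀ T ∈ Finset.univ.powersetCard AB.card, T ≠ AB →
        V (∏ i ∈ AB, (-(r i))) < V (∏ i ∈ T, (-(r i))) := by
      intro T hT hne
      rw [hvterm, hvterm]
      exact NPaux.key_lt_AB hABmem hABmem' (Finset.mem_powersetCard_univ.1 hT) hne
    rw [hWl (N - AB.card) (by omega), hNAB,
      NPaux.vsum_eq hV (fun T => ∏ i ∈ T, (-(r i))) hABin hmin, hvterm AB, hM, add_assoc,
      ← hABeq]
  have hWa : V (p.coeff a) + ((a • ζ : Γ) : WithTop Γ) = M :=
    le_antisymm ((hface (N - A.card) (by omega)).trans F2.le) (F1 a (by omega))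
  have hWa' : V (p.coeff a') + ((a' • ζ : Γ) : WithTop Γ) = M := heq.symm.trans hWa
  have hout : ∀ x, x ≤ N → (V (p.coeff x) + ((x • ζ : Γ) : WithTop Γ) = M) →
      a ≤ x ∧ x ≤ a' := by
    intro x hx hxM
    constructor
    · by_contra h
      have h2 := hstrict x hx (Or.inl (by omega))
      rw [hxM, hWa] at h2
      exact lt_irrefl M h2
    · by_contra h
      have h2 := hstrict x hx (Or.inr (by omega))
      rw [hxM, hWa] at h2
      exact lt_irrefl M h2
  have hin : ∀ x, x ≤ N → (V (p.coeff x) + ((x • ζ : Γ) : WithTop Γ) = M) →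
      N - AB.card ≤ x ∧ x ≤ N - A.card := by
    intro x hx hxM
    constructor
    · by_contra h
      have h2 := F4 x hx (Or.inr (by omega))
      rw [hxM] at h2
      exact lt_irrefl M h2
    · by_contra h
      have h2 := F4 x hx (Or.inl (by omega))
      rw [hxM] at h2
      exact lt_irrefl M h2
  have e1 := hout (N - A.card) (by omega) F2
  have e2 := hout (N - AB.card) (by omega) F3
  have e3 := hin a (by omega) hWa
  have e4 := hin a' (by omega) hWa'
  have hBcount : Nat.card {k : Fin N // V (r k) = (ζ : WithTop Γ)}
      = AB.card - A.card := by
    rw [Nat.card_eq_fintype_card, Fintype.card_subtype, ← Finset.card_sdiff_of_subset hsub]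
    congr 1
    ext k
    simp only [Finset.mem_filter, Finset.mem_univ, true_and, Finset.mem_sdiff, hAB, hA, ht]
    constructor
    · intro h
      exact ⟨h.le, by simp [h]⟩
    · rintro ⟨h1, h2⟩
      exact le_antisymm h1 (not_lt.1 h2)
  rw [hBcount]
  omega
end

section
/- Let μ̄ be a valuation on K̄[X] where K̄ is algebraically closed, and f = c·∏_{i=1}^m (X - λ_i) ∈ K̄[X]. Then the ε-factor ε_{μ̄}(f) := max_{i ≥ 1} (μ̄(f) - μ̄(∂_i f))/i equals δ_{μ̄}(f) := max{μ̄(X - λ) : λ a root of f}. -/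
open Polynomial

private lemma hasseDeriv_linear {L : Type*} [Field L] (a : L) (j : ℕ) :
    hasseDeriv j (X - C a) =
      if j = 0 then X - C a else if j = 1 then 1 else 0 := by
  match j with
  | 0 => simp
  | 1 => simp [hasseDeriv_one', derivative_sub]
  | (n+2) =>
    simp only [map_sub]
    rw [hasseDeriv_X _ (by omega), hasseDeriv_C _ _ (by omega)]
    simp

private lemma hasseDeriv_prod {L : Type*} [Field L] {ι : Type*} [DecidableEq ι]
    (s : Finset ι) (r : ι → L) :
    ∀ i : ℕ, hasseDeriv i (∏ k ∈ s, (X - C (r k))) =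
      ∑ T ∈ s.powersetCard i, ∏ k ∈ s \ T, (X - C (r k)) := by
  induction s using Finset.induction with
  | empty =>
    intro i
    cases i with
    | zero => simp
    | succ n =>
      rw [Finset.prod_empty, hasseDeriv_apply_one _ (Nat.succ_pos n)]
      simp
  | @insert a s ha ih =>
    intro i
    cases i with
    | zero => simp
    | succ n =>
      rw [Finset.prod_insert ha, Polynomial.hasseDeriv_mul,
        Finset.Nat.sum_antidiagonal_eq_sum_range_succ_mk]
      have h2 : (2 : ℕ) ≤ n + 2 := by omega
      rw [← Finset.sum_subset (Finset.range_subset_range.mpr h2) (by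
        intro x hx hx2
        simp only [Finset.mem_range] at hx hx2
        rw [hasseDeriv_linear, if_neg (by omega), if_neg (by omega), zero_mul])]
      rw [Finset.sum_range_succ, Finset.sum_range_one, hasseDeriv_linear,
        hasseDeriv_linear, if_pos rfl, if_neg one_ne_zero, if_pos rfl, one_mul,
        Finset.powersetCard_succ_insert ha, Finset.sum_union, Finset.sum_image]
      · have e1 : ∀ T ∈ s.powersetCard (n+1),
            (∏ k ∈ insert a s \ T, (X - C (r k))) =
              (X - C (r a)) * ∏ k ∈ s \ T, (X - C (r k)) := by
          intro T hT
          have haT : a ∉ T := fun h =>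
            ha ((Finset.mem_powersetCard.mp hT).1 h)
          rw [Finset.insert_sdiff_of_notMem _ haT,
            Finset.prod_insert (by simp [ha])]
        have e2 : ∀ T ∈ s.powersetCard n,
            (∏ k ∈ insert a s \ insert a T, (X - C (r k))) =
              ∏ k ∈ s \ T, (X - C (r k)) := by
          intro T hT
          have hTs : T ⊆ s := (Finset.mem_powersetCard.mp hT).1
          have hsd : s \ insert a T = s \ T := by
            ext x
            simp only [Finset.mem_sdiff, Finset.mem_insert]
            constructor
            · rintro ⟨h1, h2⟩; exact ⟨h1, fun h => h2 (Or.inr h)⟩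
            · rintro ⟨h1, h2⟩
              exact ⟨h1, fun h => h.elim (fun he => ha (he ▸ h1)) h2⟩
          rw [Finset.insert_sdiff_insert, hsd]
        rw [Finset.sum_congr rfl e1, Finset.sum_congr rfl e2, ← Finset.mul_sum]
        simp only [ih, Nat.sub_zero, Nat.add_sub_cancel]
      · intro T hT T' hT' hE
        have h1 : a ∉ T := fun h => ha ((Finset.mem_powersetCard.mp hT).1 h)
        have h2 : a ∉ T' := fun h => ha ((Finset.mem_powersetCard.mp hT').1 h)
        rw [← Finset.erase_insert h1, ← Finset.erase_insert h2, hE]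
      · rw [Finset.disjoint_right]
        intro T hT hT2
        obtain ⟨T', hT', rfl⟩ := Finset.mem_image.mp hT
        exact ha ((Finset.mem_powersetCard.mp hT2).1 (Finset.mem_insert_self a T'))

section ValHelpers

variable {L : Type*} [Field L] {Γ : Type*} [AddCommGroup Γ] [LinearOrder Γ] [IsOrderedAddMonoid Γ]
  {μ : Polynomial L → WithTop Γ}

private lemma val_sum_ge (hμ : IsValAdd μ) {ι : Type*} [DecidableEq ι] (s : Finset ι)
    (h : ι → Polynomial L) (x : WithTop Γ) (H : ∀ T ∈ s, x ≤ μ (h T)) :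
    x ≤ μ (∑ T ∈ s, h T) := by
  induction s using Finset.induction with
  | empty => simp [hμ.map_zero]
  | @insert a s ha ih =>
    rw [Finset.sum_insert ha]
    exact le_trans (le_min (H a (Finset.mem_insert_self a s))
      (ih fun T hT => H T (Finset.mem_insert_of_mem hT))) (hμ.map_add _ _)

private lemma val_sum_gt (hμ : IsValAdd μ) {ι : Type*} [DecidableEq ι] (s : Finset ι)
    (h : ι → Polynomial L) (x : Γ) (H : ∀ T ∈ s, (x : WithTop Γ) < μ (h T)) :
    (x : WithTop Γ) < μ (∑ T ∈ s, h T) := by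
  induction s using Finset.induction with
  | empty => simpa [hμ.map_zero] using WithTop.coe_lt_top x
  | @insert a s ha ih =>
    rw [Finset.sum_insert ha]
    exact lt_of_lt_of_le (lt_min (H a (Finset.mem_insert_self a s))
      (ih fun T hT => H T (Finset.mem_insert_of_mem hT))) (hμ.map_add _ _)

private lemma val_neg_s4 (hμ : IsValAdd μ) (a : Polynomial L) : μ (-a) = μ a := by
  have h0 : μ (-1 : Polynomial L) + μ (-1 : Polynomial L) = 0 := by
    rw [← hμ.map_mul, neg_one_mul, neg_neg, hμ.map_one]
  have h1 : μ (-1 : Polynomial L) = 0 := by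
    rcases eq_or_ne (μ (-1 : Polynomial L)) ⊤ with hx | hx
    · rw [hx] at h0; simp at h0
    · obtain ⟨γ, hγ⟩ := WithTop.ne_top_iff_exists.mp hx
      rw [← hγ, ← WithTop.coe_add, ← WithTop.coe_zero, WithTop.coe_inj] at h0
      have hγ0 : γ = 0 := by
        rcases lt_trichotomy γ 0 with hl | hl | hl
        · have h3 : γ + γ < 0 := by
            calc γ + γ < 0 + 0 := add_lt_add hl hl
            _ = 0 := add_zero 0
          exact absurd h0 h3.ne
        · exact hl
        · have h3 : (0 : Γ) < γ + γ := by
            calc (0 : Γ) = 0 + 0 := (add_zero 0).symm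
            _ < γ + γ := add_lt_add hl hl
          exact absurd h0 h3.ne'
      rw [← hγ, hγ0, WithTop.coe_zero]
  calc μ (-a) = μ ((-1) * a) := by rw [neg_one_mul]
  _ = 0 + μ a := by rw [hμ.map_mul, h1]
  _ = μ a := zero_add _

private lemma val_add_left (hμ : IsValAdd μ) {a b : Polynomial L} (h : μ a < μ b) :
    μ (a + b) = μ a := by
  have h2 : min (μ (a + b)) (μ b) ≤ μ a := by
    have h3 := hμ.map_add (a + b) (-b)
    rw [add_neg_cancel_right, val_neg_s4 hμ] at h3
    exact h3
  refine le_antisymm ?_ (le_trans (le_of_eq (min_eq_left h.le).symm) (hμ.map_add a b))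
  rcases min_le_iff.mp h2 with h3 | h3
  · exact h3
  · exact absurd h3 (not_le.mpr h)

end ValHelpers

/-- `ε_{μ̄}(f) = δ_{μ̄}(f)`; here `δ` is the maximum of `μ̄(X - λ)` over the
roots `λ` of `f`, and the conclusion states `ε_{μ̄}(f) = δ`, i.e. `δ` is the maximum of
`(μ̄(f) - μ̄(∂ᵢ f))/i` over `i ≥ 1` (in cross-multiplied, division-free form). -/
theorem eps_eq_delta {L Γ : Type*} [Field L] [IsAlgClosed L] [AddCommGroup Γ] [LinearOrder Γ] [IsOrderedAddMonoid Γ]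
    (μ : Polynomial L → WithTop Γ) (hμ : IsValAdd μ)
    (m : ℕ) (hm : 1 ≤ m) (c : L) (hc : c ≠ 0) (r : Fin m → L)
    (f : Polynomial L) (hf : f = Polynomial.C c * ∏ k, (Polynomial.X - Polynomial.C (r k)))
    (δ : Γ)
    (hub : ∀ k, μ (Polynomial.X - Polynomial.C (r k)) ≤ (δ : WithTop Γ))
    (hach : ∃ k, μ (Polynomial.X - Polynomial.C (r k)) = (δ : WithTop Γ)) :
    (∀ i, 1 ≤ i → μ f ≤ μ (Polynomial.hasseDeriv i f) + ((i • δ : Γ) : WithTop Γ)) ∧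
      ∃ i, 1 ≤ i ∧ μ f = μ (Polynomial.hasseDeriv i f) + ((i • δ : Γ) : WithTop Γ) := by
  classical
  have hvne : ∀ k, μ (X - C (r k)) ≠ ⊤ := fun k =>
    ((hub k).trans_lt (WithTop.coe_lt_top δ)).ne
  choose w hw using fun k => WithTop.ne_top_iff_exists.mp (hvne k)
  have hwle : ∀ k, w k ≤ δ := fun k => by
    have h := hub k; rw [← hw k] at h; exact_mod_cast h
  have hcne : μ (C c) ≠ ⊤ := fun h => hc (by simpa using hμ.supp _ h)
  obtain ⟨γc, hγc⟩ := WithTop.ne_top_iff_exists.mp hcne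
  have hprodv : ∀ S : Finset (Fin m),
      μ (∏ k ∈ S, (X - C (r k))) = ((∑ k ∈ S, w k : Γ) : WithTop Γ) := by
    intro S
    induction S using Finset.induction with
    | empty => simpa using hμ.map_one
    | @insert a S ha ih =>
      rw [Finset.prod_insert ha, Finset.sum_insert ha, hμ.map_mul, ih, ← hw a,
        ← WithTop.coe_add]
  have hfv : μ f = ((γc + ∑ k, w k : Γ) : WithTop Γ) := by
    rw [hf, hμ.map_mul, hprodv, ← hγc, ← WithTop.coe_add]
  have hD : ∀ i : ℕ, hasseDeriv i f =
      C c * ∑ T ∈ Finset.powersetCard i Finset.univ,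
        ∏ k ∈ Finset.univ \ T, (X - C (r k)) := by
    intro i
    rw [hf, ← smul_eq_C_mul, map_smul, hasseDeriv_prod, smul_eq_C_mul]
  have hterm : ∀ T : Finset (Fin m), μ (∏ k ∈ Finset.univ \ T, (X - C (r k)))
      = ((∑ k ∈ Finset.univ \ T, w k : Γ) : WithTop Γ) := fun T => hprodv _
  have part1 : ∀ i, 1 ≤ i → μ f ≤ μ (hasseDeriv i f) + ((i • δ : Γ) : WithTop Γ) := by
    intro i hi
    by_cases him : i ≤ m
    · rw [hD i, hμ.map_mul, ← hγc]
      have h1 : ((∑ k, w k - i • δ : Γ) : WithTop Γ) ≤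
          μ (∑ T ∈ Finset.powersetCard i Finset.univ,
            ∏ k ∈ Finset.univ \ T, (X - C (r k))) := by
        apply val_sum_ge hμ
        intro T hT
        rw [hterm T]
        apply WithTop.coe_le_coe.mpr
        obtain ⟨hTs, hTc⟩ := Finset.mem_powersetCard.mp hT
        have h2 : ∑ k ∈ T, w k ≤ i • δ := by
          calc ∑ k ∈ T, w k ≤ T.card • δ :=
              Finset.sum_le_card_nsmul _ _ _ fun k _ => hwle k
          _ = i • δ := by rw [hTc]
        have h3 : ∑ k ∈ Finset.univ \ T, w k + ∑ k ∈ T, w k = ∑ k, w k :=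
          Finset.sum_sdiff hTs
        rw [sub_le_iff_le_add, ← h3]
        exact add_le_add_right h2 _
      have h4 := add_le_add_left h1 ((i • δ : Γ) : WithTop Γ)
      rw [← WithTop.coe_add, sub_add_cancel] at h4
      rw [hfv, WithTop.coe_add, add_assoc]
      exact add_le_add_right h4 _
    · have hz : hasseDeriv i f = 0 := by
        apply hasseDeriv_eq_zero_of_lt_natDegree
        have hd : f.natDegree ≤ m := by
          rw [hf]
          refine le_trans (natDegree_mul_le) ?_
          have : (∏ k, (X - C (r k)) : Polynomial L).natDegree ≤ m := by
            refine le_trans (natDegree_prod_le _ _) ?_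
            simp
          simpa using this
        omega
      rw [hz, hμ.map_zero, top_add]
      exact le_top
  refine ⟨part1, ?_⟩
  obtain ⟨k₀, hk₀⟩ := hach
  set T₀ : Finset (Fin m) := Finset.univ.filter (fun k => w k = δ) with hT₀def
  have hk₀T₀ : k₀ ∈ T₀ := by
    rw [hT₀def, Finset.mem_filter]
    exact ⟨Finset.mem_univ _, WithTop.coe_injective ((hw k₀).trans hk₀)⟩
  set t := T₀.card with ht
  have ht1 : 1 ≤ t := Finset.card_pos.mpr ⟨k₀, hk₀T₀⟩
  have hT₀mem : T₀ ∈ Finset.powersetCard t Finset.univ :=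
    Finset.mem_powersetCard.mpr ⟨Finset.subset_univ _, rfl⟩
  have hsumT₀ : ∑ k ∈ T₀, w k = t • δ := by
    rw [ht, Finset.sum_congr rfl (fun k hk => (Finset.mem_filter.mp hk).2),
      Finset.sum_const]
  have hstrict : ∀ T ∈ (Finset.powersetCard t Finset.univ).erase T₀,
      ((∑ k ∈ Finset.univ \ T₀, w k : Γ) : WithTop Γ) <
        μ (∏ k ∈ Finset.univ \ T, (X - C (r k))) := by
    intro T hT
    obtain ⟨hTne, hTP⟩ := Finset.mem_erase.mp hT
    obtain ⟨hTs, hTc⟩ := Finset.mem_powersetCard.mp hTP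
    rw [hterm T]
    apply WithTop.coe_lt_coe.mpr
    have hnots : ¬ T ⊆ T₀ := fun hsub =>
      hTne (Finset.eq_of_subset_of_card_le hsub (by rw [hTc]))
    obtain ⟨k₁, hk₁T, hk₁n⟩ := Finset.not_subset.mp hnots
    have hk₁lt : w k₁ < δ := lt_of_le_of_ne (hwle k₁)
      (by simpa [hT₀def] using hk₁n)
    have hTsum : ∑ k ∈ T, w k < t • δ := by
      calc ∑ k ∈ T, w k < ∑ _k ∈ T, δ :=
          Finset.sum_lt_sum (fun k _ => hwle k) ⟨k₁, hk₁T, hk₁lt⟩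
      _ = t • δ := by rw [Finset.sum_const, hTc]
    have e1 : ∑ k ∈ Finset.univ \ T₀, w k + ∑ k ∈ T₀, w k = ∑ k, w k :=
      Finset.sum_sdiff (Finset.subset_univ _)
    have e2 : ∑ k ∈ Finset.univ \ T, w k + ∑ k ∈ T, w k = ∑ k, w k :=
      Finset.sum_sdiff (Finset.subset_univ _)
    have h5 : ∑ k ∈ Finset.univ \ T₀, w k + t • δ <
        ∑ k ∈ Finset.univ \ T, w k + t • δ := by
      calc ∑ k ∈ Finset.univ \ T₀, w k + t • δ = ∑ k, w k := by rw [← hsumT₀, e1]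
      _ = ∑ k ∈ Finset.univ \ T, w k + ∑ k ∈ T, w k := e2.symm
      _ < ∑ k ∈ Finset.univ \ T, w k + t • δ := add_lt_add_right hTsum _
    exact lt_of_add_lt_add_right h5
  refine ⟨t, ht1, ?_⟩
  have hsplit := Finset.add_sum_erase _
    (fun T => ∏ k ∈ Finset.univ \ T, (X - C (r k))) hT₀mem
  have hrest := val_sum_gt hμ _ _ _ hstrict
  have hSsum : μ (∑ T ∈ Finset.powersetCard t Finset.univ,
      ∏ k ∈ Finset.univ \ T, (X - C (r k)))
      = ((∑ k ∈ Finset.univ \ T₀, w k : Γ) : WithTop Γ) := by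
    rw [← hsplit, val_add_left hμ (by rw [hterm T₀]; exact hrest), hterm T₀]
  rw [hD t, hμ.map_mul, hSsum, ← hγc, hfv, ← WithTop.coe_add, ← WithTop.coe_add]
  rw [WithTop.coe_inj, add_assoc]
  congr 1
  rw [← hsumT₀, Finset.sum_sdiff (Finset.subset_univ _)]
end

section
/- Let Q ∈ K[X] be an abstract key polynomial for μ and a ∈ K̄ an optimising root of Q with δ = μ̄(X - a). Then μ̄_{X-a}(Q) = μ(Q); consequently the truncation μ̄_{X-a} restricted to K[X] equals μ_Q. -/
open Polynomial

namespace PVAux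

/-! ## Generic `WithTop` helpers -/

theorem wadd_lt_wadd {Γ : Type*} [AddCommGroup Γ] [LinearOrder Γ] [IsOrderedAddMonoid Γ] {a b c d : WithTop Γ}
    (h : a < b) (h2 : c ≤ d) (ha : a ≠ ⊤) (hc : c ≠ ⊤) : a + c < b + d := by
  lift a to Γ using ha
  lift c to Γ using hc
  rcases eq_or_ne d ⊤ with rfl | hd
  · rw [add_top, ← WithTop.coe_add]; exact WithTop.coe_lt_top _
  rcases eq_or_ne b ⊤ with rfl | hb
  · rw [top_add, ← WithTop.coe_add]; exact WithTop.coe_lt_top _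
  lift d to Γ using hd
  lift b to Γ using hb
  rw [← WithTop.coe_add, ← WithTop.coe_add, WithTop.coe_lt_coe]
  exact add_lt_add_of_lt_of_le (WithTop.coe_lt_coe.mp h) (WithTop.coe_le_coe.mp h2)

theorem wcoe_nsmul {Γ : Type*} [AddCommGroup Γ] [LinearOrder Γ] [IsOrderedAddMonoid Γ] (n : ℕ) (x : Γ) :
    ((n • x : Γ) : WithTop Γ) = n • (x : WithTop Γ) := by
  induction n with
  | zero => simp
  | succ n ih => rw [succ_nsmul, succ_nsmul, WithTop.coe_add, ih]

theorem wnsmul_le_wnsmul {Γ : Type*} [AddCommGroup Γ] [LinearOrder Γ] [IsOrderedAddMonoid Γ] (n : ℕ) {x y : WithTop Γ}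
    (h : x ≤ y) : n • x ≤ n • y := by
  induction n with
  | zero => simp
  | succ n ih => rw [succ_nsmul, succ_nsmul]; exact add_le_add ih h

/-! ## Generic facts about additive valuations -/

section Val

variable {R : Type*} [CommRing R] {Γ : Type*} [AddCommGroup Γ] [LinearOrder Γ] [IsOrderedAddMonoid Γ]
  {v : R → WithTop Γ}

theorem vne_top (hv : IsValAdd v) {a : R} (h : a ≠ 0) : v a ≠ ⊤ := fun ht => h (hv.supp a ht)

theorem vneg_one (hv : IsValAdd v) : v (-1) = 0 := by
  have h2 : v (-1) + v (-1) = 0 := by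
    rw [← hv.map_mul, neg_one_mul, neg_neg, hv.map_one]
  have hne : v (-1) ≠ ⊤ := by
    intro ht; rw [ht, top_add] at h2; simp at h2
  lift (v (-1)) to Γ using hne with x hx
  rw [← WithTop.coe_add] at h2
  norm_cast at h2 ⊢
  rcases lt_trichotomy x 0 with h | h | h
  · exact absurd h2 (ne_of_lt (by simpa using add_lt_add h h))
  · exact h
  · exact absurd h2 (ne_of_gt (by simpa using add_lt_add h h))

theorem vneg (hv : IsValAdd v) (a : R) : v (-a) = v a := by
  have h : v (-a) = v (-1) + v a := by rw [← hv.map_mul]; ring_nf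
  rw [h, vneg_one hv, zero_add]

theorem vadd_eq_left (hv : IsValAdd v) {a b : R} (h : v a < v b) : v (a + b) = v a := by
  refine le_antisymm ?_ (le_trans (by rw [min_eq_left h.le]) (hv.map_add a b))
  by_contra hc
  push_neg at hc
  have h2 : min (v (a + b)) (v (-b)) ≤ v a := by
    have he : a + b + -b = a := by ring
    have := hv.map_add (a + b) (-b)
    rwa [he] at this
  rw [vneg hv] at h2
  exact absurd h2 (not_le.mpr (lt_min hc h))

theorem vle_sum_add (hv : IsValAdd v) {ι : Type*} (s : Finset ι) (g : ι → R) (m c : WithTop Γ)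
    (h : ∀ i ∈ s, m ≤ v (g i) + c) : m ≤ v (∑ i ∈ s, g i) + c := by
  classical
  induction s using Finset.cons_induction with
  | empty => rw [Finset.sum_empty, hv.map_zero, top_add]; exact le_top
  | cons i s hi ih =>
    rw [Finset.sum_cons]
    have h1 : m ≤ min (v (g i)) (v (∑ j ∈ s, g j)) + c := by
      rcases min_cases (v (g i)) (v (∑ j ∈ s, g j)) with ⟨he, _⟩ | ⟨he, _⟩
      · rw [he]; exact h i (Finset.mem_cons_self i s)
      · rw [he]; exact ih fun j hj => h j (Finset.mem_cons.mpr (Or.inr hj))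
    exact h1.trans (add_le_add_left (hv.map_add _ _) c)

theorem vle_sum (hv : IsValAdd v) {ι : Type*} (s : Finset ι) (g : ι → R) (m : WithTop Γ)
    (h : ∀ i ∈ s, m ≤ v (g i)) : m ≤ v (∑ i ∈ s, g i) := by
  have := vle_sum_add hv s g m 0 (fun i hi => by rw [add_zero]; exact h i hi)
  rwa [add_zero] at this

theorem vlt_sum (hv : IsValAdd v) {ι : Type*} (s : Finset ι) (g : ι → R) (m : WithTop Γ)
    (hm : m ≠ ⊤) (h : ∀ i ∈ s, m < v (g i)) : m < v (∑ i ∈ s, g i) := by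
  classical
  induction s using Finset.cons_induction with
  | empty => rw [Finset.sum_empty, hv.map_zero]; exact lt_top_iff_ne_top.mpr hm
  | cons i s hi ih =>
    rw [Finset.sum_cons]
    refine lt_of_lt_of_le ?_ (hv.map_add _ _)
    exact lt_min (h i (Finset.mem_cons_self i s))
      (ih fun j hj => h j (Finset.mem_cons.mpr (Or.inr hj)))

theorem vsum_eq (hv : IsValAdd v) {ι : Type*} (s : Finset ι) (g : ι → R) {i₀ : ι}
    (hi₀ : i₀ ∈ s) (hne : v (g i₀) ≠ ⊤)
    (h : ∀ i ∈ s, i ≠ i₀ → v (g i₀) < v (g i)) : v (∑ i ∈ s, g i) = v (g i₀) := by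
  classical
  rw [← Finset.add_sum_erase s g hi₀]
  rcases Finset.eq_empty_or_nonempty (s.erase i₀) with he | _
  · rw [he, Finset.sum_empty, add_zero]
  have hlt : v (g i₀) < v (∑ i ∈ s.erase i₀, g i) :=
    vlt_sum hv _ _ _ hne fun i hi =>
      h i (Finset.mem_of_mem_erase hi) (Finset.ne_of_mem_erase hi)
  exact vadd_eq_left hv hlt

theorem vnat_nonneg (hv : IsValAdd v) (n : ℕ) : (0 : WithTop Γ) ≤ v (n : R) := by
  induction n with
  | zero => rw [Nat.cast_zero, hv.map_zero]; exact le_top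
  | succ n ih =>
    push_cast
    refine le_trans (le_min ih (le_of_eq hv.map_one.symm)) (hv.map_add _ _)

theorem vpow (hv : IsValAdd v) (x : R) (n : ℕ) : v (x ^ n) = n • v x := by
  induction n with
  | zero => rw [pow_zero, hv.map_one, zero_smul]
  | succ n ih => rw [pow_succ, hv.map_mul, ih, succ_nsmul]

end Val

/-! ## The weighted Gauss minimum and its multiplicativity -/

section Gmin
variable {L : Type*} [Field L] {Γ : Type*} [AddCommGroup Γ] [LinearOrder Γ] [IsOrderedAddMonoid Γ]

/-- weighted Gauss minimum of the coefficients. -/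
noncomputable def gmin (ν : L → WithTop Γ) (δ : Γ) (g : L[X]) : WithTop Γ :=
  (Finset.range (g.natDegree + 1)).inf fun i => ν (g.coeff i) + ((i • δ : Γ) : WithTop Γ)

variable {ν : L → WithTop Γ} {δ : Γ}

theorem gmin_le (hν : IsValAdd ν) (g : L[X]) (i : ℕ) :
    gmin ν δ g ≤ ν (g.coeff i) + ((i • δ : Γ) : WithTop Γ) := by
  rcases le_or_gt i g.natDegree with h | h
  · exact Finset.inf_le (Finset.mem_range.mpr (Nat.lt_succ_of_le h))
  · rw [coeff_eq_zero_of_natDegree_lt h, hν.map_zero, top_add]; exact le_top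

theorem gmin_ne_top (hν : IsValAdd ν) {g : L[X]} (hg : g ≠ 0) : gmin ν δ g ≠ ⊤ := by
  intro ht
  have h1 := gmin_le (δ := δ) hν g g.natDegree
  rw [ht, top_le_iff] at h1
  have h2 : ν (g.coeff g.natDegree) = ⊤ := by
    rcases eq_or_ne (ν (g.coeff g.natDegree)) ⊤ with h | h
    · exact h
    · exfalso
      lift (ν (g.coeff g.natDegree)) to Γ using h with x
      rw [← WithTop.coe_add] at h1
      exact WithTop.coe_ne_top h1
  have h3 : g.coeff g.natDegree = 0 := hν.supp _ h2
  exact (leadingCoeff_ne_zero.mpr hg) (by simpa using h3)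

theorem gmin_exists_least (hν : IsValAdd ν) {g : L[X]} (hg : g ≠ 0) :
    ∃ i, i ≤ g.natDegree ∧ gmin ν δ g = ν (g.coeff i) + ((i • δ : Γ) : WithTop Γ) ∧
      ∀ i' < i, gmin ν δ g < ν (g.coeff i') + ((i' • δ : Γ) : WithTop Γ) := by
  classical
  obtain ⟨i, hi, hieq⟩ := Finset.exists_mem_eq_inf (Finset.range (g.natDegree + 1))
    (Finset.nonempty_range_iff.mpr (Nat.succ_ne_zero _))
    (fun i => ν (g.coeff i) + ((i • δ : Γ) : WithTop Γ))
  have hex : ∃ j, gmin ν δ g = ν (g.coeff j) + ((j • δ : Γ) : WithTop Γ) := ⟨i, hieq⟩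
  refine ⟨Nat.find hex, ?_, Nat.find_spec hex, ?_⟩
  · exact le_trans (Nat.find_min' hex hieq) (Nat.lt_succ_iff.mp (Finset.mem_range.mp hi))
  · intro i' hi'
    exact lt_of_le_of_ne (gmin_le hν g i') (Nat.find_min hex hi')

theorem gmin_coeff_ne_top (hν : IsValAdd ν) {g : L[X]} {i : ℕ}
    (h : gmin ν δ g = ν (g.coeff i) + ((i • δ : Γ) : WithTop Γ)) (hg : g ≠ 0) :
    ν (g.coeff i) ≠ ⊤ := by
  intro ht
  rw [ht, top_add] at h
  exact gmin_ne_top hν hg h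

private theorem term_add_term (x y : WithTop Γ) (i j : ℕ) (δ : Γ) :
    (x + ((i • δ : Γ) : WithTop Γ)) + (y + ((j • δ : Γ) : WithTop Γ)) =
      (x + y) + (((i + j) • δ : Γ) : WithTop Γ) := by
  rw [add_nsmul, WithTop.coe_add, add_add_add_comm]

theorem gmin_mul_ge (hν : IsValAdd ν) (f g : L[X]) :
    gmin ν δ f + gmin ν δ g ≤ gmin ν δ (f * g) := by
  refine Finset.le_inf fun k _ => ?_
  rw [coeff_mul]
  refine vle_sum_add hν _ _ _ _ fun x hx => ?_
  rw [hν.map_mul, ← Finset.HasAntidiagonal.mem_antidiagonal.mp hx, ← term_add_term]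
  exact add_le_add (gmin_le hν f x.1) (gmin_le hν g x.2)

theorem gmin_mul (hν : IsValAdd ν) (f g : L[X]) :
    gmin ν δ (f * g) = gmin ν δ f + gmin ν δ g := by
  rcases eq_or_ne f 0 with rfl | hf
  · rw [zero_mul]
    have : gmin ν δ (0 : L[X]) = ⊤ := by
      simp [gmin, hν.map_zero]
    rw [this, top_add]
  rcases eq_or_ne g 0 with rfl | hg
  · rw [mul_zero]
    have : gmin ν δ (0 : L[X]) = ⊤ := by simp [gmin, hν.map_zero]
    rw [this, add_top]
  refine le_antisymm ?_ (gmin_mul_ge hν f g)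
  obtain ⟨i₀, hi₀le, hi₀, hi₀min⟩ := gmin_exists_least hν hf
  obtain ⟨j₀, hj₀le, hj₀, hj₀min⟩ := gmin_exists_least hν hg
  have hfi : ν (f.coeff i₀) ≠ ⊤ := gmin_coeff_ne_top hν hi₀ hf
  have hgj : ν (g.coeff j₀) ≠ ⊤ := gmin_coeff_ne_top hν hj₀ hg
  set k₀ := i₀ + j₀ with hk₀
  have hcoeff : ν ((f * g).coeff k₀) = ν (f.coeff i₀) + ν (g.coeff j₀) := by
    rw [coeff_mul]
    have hmem : (i₀, j₀) ∈ Finset.HasAntidiagonal.antidiagonal k₀ := Finset.HasAntidiagonal.mem_antidiagonal.mpr rfl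
    rw [vsum_eq hν _ _ hmem (by rw [hν.map_mul]; exact WithTop.add_ne_top.mpr ⟨hfi, hgj⟩) ?_]
    · rw [hν.map_mul]
    intro x hx hxne
    rw [hν.map_mul, hν.map_mul]
    have hxk : x.1 + x.2 = k₀ := Finset.HasAntidiagonal.mem_antidiagonal.mp hx
    have hcases : x.1 < i₀ ∨ x.2 < j₀ := by
      rcases lt_trichotomy x.1 i₀ with h | h | h
      · exact Or.inl h
      · exact absurd (Prod.ext h (by omega)) hxne
      · exact Or.inr (by omega)
    have key : (ν (f.coeff i₀) + ν (g.coeff j₀)) + ((k₀ • δ : Γ) : WithTop Γ) <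
        (ν (f.coeff x.1) + ν (g.coeff x.2)) + ((k₀ • δ : Γ) : WithTop Γ) := by
      rw [← term_add_term _ _ _ _ δ, ← hxk, ← term_add_term _ _ _ _ δ]
      rcases hcases with h | h
      · rw [← hi₀, ← hj₀]
        exact wadd_lt_wadd (hi₀.symm ▸ hi₀min x.1 h) (gmin_le hν g x.2)
          (gmin_ne_top hν hf) (gmin_ne_top hν hg)
      · rw [← hi₀, ← hj₀, add_comm (gmin ν δ f), add_comm (ν (f.coeff x.1) + _)]
        exact wadd_lt_wadd (hj₀.symm ▸ hj₀min x.2 h) (gmin_le hν f x.1)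
          (gmin_ne_top hν hg) (gmin_ne_top hν hf)
    exact (WithTop.add_lt_add_iff_right (WithTop.coe_ne_top)).mp key
  calc gmin ν δ (f * g) ≤ ν ((f * g).coeff k₀) + ((k₀ • δ : Γ) : WithTop Γ) := gmin_le hν _ _
  _ = (ν (f.coeff i₀) + ν (g.coeff j₀)) + ((k₀ • δ : Γ) : WithTop Γ) := by rw [hcoeff]
  _ = gmin ν δ f + gmin ν δ g := by rw [← term_add_term _ _ _ _ δ, ← hi₀, ← hj₀]

theorem gmin_add_min (hν : IsValAdd ν) (f g : L[X]) :
    min (gmin ν δ f) (gmin ν δ g) ≤ gmin ν δ (f + g) := by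
  refine Finset.le_inf fun k _ => ?_
  rw [coeff_add]
  refine le_trans ?_ (add_le_add_left (hν.map_add _ _) _)
  rcases min_cases (ν (f.coeff k)) (ν (g.coeff k)) with ⟨he, _⟩ | ⟨he, _⟩
  · rw [he]; exact (min_le_left _ _).trans (gmin_le hν f k)
  · rw [he]; exact (min_le_right _ _).trans (gmin_le hν g k)

/-! ## Basic properties of `pairVal` -/

section PV
variable (δ) (a : L)

theorem pairVal_eq_gmin (g : L[X]) : pairVal ν a δ g = gmin ν δ (taylor a g) := by
  unfold pairVal gmin
  rw [natDegree_taylor]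

theorem pv_zero (hν : IsValAdd ν) : pairVal ν a δ (0 : L[X]) = ⊤ := by
  rw [pairVal_eq_gmin, map_zero]
  simp [gmin, hν.map_zero]

theorem pv_mul (hν : IsValAdd ν) (f g : L[X]) :
    pairVal ν a δ (f * g) = pairVal ν a δ f + pairVal ν a δ g := by
  rw [pairVal_eq_gmin, pairVal_eq_gmin, pairVal_eq_gmin, taylor_mul, gmin_mul hν]

theorem pv_add_min (hν : IsValAdd ν) (f g : L[X]) :
    min (pairVal ν a δ f) (pairVal ν a δ g) ≤ pairVal ν a δ (f + g) := by
  rw [pairVal_eq_gmin, pairVal_eq_gmin, pairVal_eq_gmin, map_add]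
  exact gmin_add_min hν _ _

theorem pv_neg (hν : IsValAdd ν) (f : L[X]) : pairVal ν a δ (-f) = pairVal ν a δ f := by
  rw [pairVal_eq_gmin, pairVal_eq_gmin, map_neg]
  unfold gmin
  rw [natDegree_neg]
  refine Finset.inf_congr rfl fun i _ => ?_
  rw [coeff_neg, vneg hν]

theorem pv_add_eq (hν : IsValAdd ν) {f g : L[X]}
    (h : pairVal ν a δ f < pairVal ν a δ g) :
    pairVal ν a δ (f + g) = pairVal ν a δ f := by
  refine le_antisymm ?_ (le_trans (by rw [min_eq_left h.le]) (pv_add_min δ a hν f g))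
  by_contra hc
  push_neg at hc
  have h2 : min (pairVal ν a δ (f + g)) (pairVal ν a δ (-g)) ≤ pairVal ν a δ f := by
    have he : f + g + -g = f := by ring
    have := pv_add_min δ a hν (f + g) (-g)
    rwa [he] at this
  rw [pv_neg δ a hν] at h2
  exact absurd h2 (not_le.mpr (lt_min hc h))

theorem pv_le_coeff (hν : IsValAdd ν) (g : L[X]) (i : ℕ) :
    pairVal ν a δ g ≤ ν ((taylor a g).coeff i) + ((i • δ : Γ) : WithTop Γ) := by
  rw [pairVal_eq_gmin]; exact gmin_le hν _ i

theorem pv_le_eval (hν : IsValAdd ν) (g : L[X]) :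
    pairVal ν a δ g ≤ ν (g.eval a) := by
  have := pv_le_coeff δ a hν g 0
  rwa [taylor_coeff_zero, zero_smul, WithTop.coe_zero, add_zero] at this

theorem pv_linear (hν : IsValAdd ν) (b : L) :
    pairVal ν a δ (X - C b) = min (ν (a - b)) (δ : WithTop Γ) := by
  have ht : taylor a (X - C b) = X + C (a - b) := by
    rw [map_sub, taylor_X, taylor_C, C_sub]; ring
  rw [pairVal_eq_gmin, ht]
  have hnd : (X + C (a - b) : L[X]).natDegree = 1 := by
    simpa [add_comm] using natDegree_X_add_C (a - b)
  unfold gmin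
  rw [hnd]
  have h0 : (X + C (a - b) : L[X]).coeff 0 = a - b := by simp
  have h1 : (X + C (a - b) : L[X]).coeff 1 = 1 := by simp
  rw [show Finset.range 2 = {0, 1} by decide]
  rw [Finset.inf_insert, Finset.inf_singleton, h0, h1, hν.map_one, zero_add, zero_smul,
    WithTop.coe_zero, add_zero, one_smul]

theorem pv_one (hν : IsValAdd ν) : pairVal ν a δ (1 : L[X]) = 0 := by
  rw [pairVal_eq_gmin, taylor_one]
  unfold gmin
  simp [hν.map_one]

theorem pv_multiset (hν : IsValAdd ν) (s : Multiset L) :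
    pairVal ν a δ ((s.map fun b => X - C b).prod) =
      ((s.map fun b => pairVal ν a δ (X - C b)).sum) := by
  induction s using Multiset.induction_on with
  | empty => simpa using pv_one δ a hν
  | cons b s ih =>
    rw [Multiset.map_cons, Multiset.prod_cons, pv_mul δ a hν, ih, Multiset.map_cons,
      Multiset.sum_cons]

theorem pv_hasse (hν : IsValAdd ν) (G : L[X]) (j : ℕ) :
    pairVal ν a δ G ≤ pairVal ν a δ (hasseDeriv j G) + ((j • δ : Γ) : WithTop Γ) := by
  obtain ⟨k, hk, hkeq⟩ := Finset.exists_mem_eq_inf (Finset.range ((hasseDeriv j G).natDegree + 1))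
    (Finset.nonempty_range_iff.mpr (Nat.succ_ne_zero _))
    (fun i => ν ((taylor a (hasseDeriv j G)).coeff i) + ((i • δ : Γ) : WithTop Γ))
  have hco : (taylor a (hasseDeriv j G)).coeff k
      = (k + j).choose k • (hasseDeriv (k + j) G).eval a := by
    rw [taylor_coeff]
    have := congrArg (fun (F : L[X] →ₗ[L] L[X]) => (F G).eval a) (hasseDeriv_comp k j (R := L))
    simpa using this
  have hge : ν ((taylor a G).coeff (k + j)) ≤ ν ((taylor a (hasseDeriv j G)).coeff k) := by
    rw [hco, taylor_coeff]
    have hmul : ((k + j).choose k • (hasseDeriv (k + j) G).eval a) =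
        (((k + j).choose k : L)) * ((hasseDeriv (k + j) G).eval a) := by
      rw [nsmul_eq_mul]
    rw [hmul, hν.map_mul]
    calc ν ((hasseDeriv (k + j) G).eval a)
        = 0 + ν ((hasseDeriv (k + j) G).eval a) := (zero_add _).symm
    _ ≤ _ := add_le_add_left (vnat_nonneg hν _) _
  calc pairVal ν a δ G ≤ ν ((taylor a G).coeff (k + j)) + (((k + j) • δ : Γ) : WithTop Γ) :=
        pv_le_coeff δ a hν G (k + j)
  _ ≤ ν ((taylor a (hasseDeriv j G)).coeff k) + (((k + j) • δ : Γ) : WithTop Γ) :=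
        add_le_add_left hge _
  _ = (ν ((taylor a (hasseDeriv j G)).coeff k) + ((k • δ : Γ) : WithTop Γ))
        + ((j • δ : Γ) : WithTop Γ) := by
        rw [add_nsmul, WithTop.coe_add, add_assoc]
  _ = pairVal ν a δ (hasseDeriv j G) + ((j • δ : Γ) : WithTop Γ) := by
        rw [pairVal, ← hkeq]

end PV
end Gmin

end PVAux
namespace PVAux

section Main
variable {K L Γ : Type*} [Field K] [Field L] [Algebra K L] [IsAlgClosed L]
  [Algebra.IsAlgebraic K L] [AddCommGroup Γ] [LinearOrder Γ] [IsOrderedAddMonoid Γ]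
variable {μ : K[X] → WithTop Γ} {νbar : L → WithTop Γ} {μbar : L[X] → WithTop Γ}

set_option linter.unusedSectionVars false

theorem hasse_map (f : K[X]) (i : ℕ) :
    (hasseDeriv i f).map (algebraMap K L) = hasseDeriv i (f.map (algebraMap K L)) := by
  ext k
  rw [coeff_map, hasseDeriv_coeff, hasseDeriv_coeff, coeff_map, map_mul, map_natCast]

theorem hasse_eq_zero_of_lt {f : K[X]} {i : ℕ} (h : f.natDegree < i) : hasseDeriv i f = 0 := by
  ext k
  rw [hasseDeriv_coeff, coeff_eq_zero_of_natDegree_lt (by omega), mul_zero, coeff_zero]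

theorem hasse_degree_lt {f : K[X]} {i : ℕ} (hf : f ≠ 0) (hi : 1 ≤ i)
    (h0 : hasseDeriv i f ≠ 0) : (hasseDeriv i f).degree < f.degree := by
  have hile : i ≤ f.natDegree := by
    by_contra hc
    exact h0 (hasse_eq_zero_of_lt (by omega))
  have h1 : (hasseDeriv i f).natDegree < f.natDegree := by
    have := natDegree_hasseDeriv_le f i
    omega
  calc (hasseDeriv i f).degree ≤ ((hasseDeriv i f).natDegree : WithBot ℕ) := degree_le_natDegree
  _ < (f.natDegree : WithBot ℕ) := by exact_mod_cast h1
  _ = f.degree := (degree_eq_natDegree hf).symm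

theorem mu_prod_multiset (hμbar : IsValAdd μbar) (s : Multiset L) :
    μbar ((s.map fun b => X - C b).prod) = (s.map fun b => μbar (X - C b)).sum := by
  induction s using Multiset.induction_on with
  | empty => simpa using hμbar.map_one
  | cons b s ih => rw [Multiset.map_cons, Multiset.prod_cons, hμbar.map_mul, ih,
      Multiset.map_cons, Multiset.sum_cons]

theorem nu_prod_multiset (hνbar : IsValAdd νbar) (s : Multiset L) :
    νbar s.prod = (s.map νbar).sum := by
  induction s using Multiset.induction_on with
  | empty => simpa using hνbar.map_one
  | cons b s ih => rw [Multiset.prod_cons, hνbar.map_mul, ih, Multiset.map_cons,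
      Multiset.sum_cons]

theorem factor_roots (g : L[X]) : g = C g.leadingCoeff * (g.roots.map fun b => X - C b).prod :=
  (IsAlgClosed.splits g).eq_prod_roots

theorem mubar_eq_roots (hμbar : IsValAdd μbar) (hextL : ∀ x : L, μbar (Polynomial.C x) = νbar x)
    (g : L[X]) :
    μbar g = νbar g.leadingCoeff + (g.roots.map fun b => μbar (X - C b)).sum := by
  conv_lhs => rw [factor_roots g]
  rw [hμbar.map_mul, hextL, mu_prod_multiset hμbar]

theorem nubar_eval_roots (hνbar : IsValAdd νbar) (g : L[X]) (c : L) :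
    νbar (g.eval c) = νbar g.leadingCoeff + ((g.roots.map fun b => νbar (c - b)).sum) := by
  conv_lhs => rw [factor_roots g]
  rw [eval_mul, eval_C, hνbar.map_mul, eval_multiset_prod, Multiset.map_map]
  have hco : ∀ b ∈ g.roots, ((fun p => eval c p) ∘ fun b => X - C b) b = c - b := by
    intro b _; simp
  rw [Multiset.map_congr rfl hco, nu_prod_multiset hνbar, Multiset.map_map]
  simp [Function.comp]

theorem dist_min (hνbar : IsValAdd νbar) (hμbar : IsValAdd μbar)
    (hextL : ∀ x : L, μbar (Polynomial.C x) = νbar x) (b c : L) :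
    min (μbar (X - C c)) (μbar (X - C b)) ≤ νbar (b - c) := by
  have he : (C (b - c) : L[X]) = (X - C c) + -(X - C b) := by
    rw [C_sub]; ring
  rw [← hextL, he]
  refine le_trans ?_ (hμbar.map_add _ _)
  rw [vneg hμbar]

theorem dist_min2 (hνbar : IsValAdd νbar) (hμbar : IsValAdd μbar)
    (hextL : ∀ x : L, μbar (Polynomial.C x) = νbar x) (b c : L) :
    min (μbar (X - C c)) (νbar (c - b)) ≤ μbar (X - C b) := by
  have he : (X - C b : L[X]) = (X - C c) + C (c - b) := by
    rw [C_sub]; ring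
  rw [he]
  refine le_trans ?_ (hμbar.map_add _ _)
  rw [hextL]

variable {a : L} {δ : Γ}

theorem close_min (hνbar : IsValAdd νbar) (hμbar : IsValAdd μbar)
    (hextL : ∀ x : L, μbar (Polynomial.C x) = νbar x)
    (hδ : μbar (X - C a) = (δ : WithTop Γ)) {θ : L}
    (h : μbar (X - C θ) ≤ (δ : WithTop Γ)) :
    min (νbar (a - θ)) (δ : WithTop Γ) = μbar (X - C θ) := by
  have h1 : μbar (X - C θ) ≤ νbar (a - θ) := by
    have := dist_min hνbar hμbar hextL a θ
    rwa [hδ, min_eq_left h] at this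
  have h2 : min (δ : WithTop Γ) (νbar (a - θ)) ≤ μbar (X - C θ) := by
    have := dist_min2 hνbar hμbar hextL θ a
    rwa [hδ] at this
  rcases le_or_gt (νbar (a - θ)) (δ : WithTop Γ) with h3 | h3
  · rw [min_eq_left h3]
    exact le_antisymm (le_trans (by rw [min_eq_right h3]) h2) h1
  · rw [min_eq_right h3.le]
    exact le_antisymm (le_trans (by rw [min_eq_left h3.le]) h2) h

theorem close_eq (hνbar : IsValAdd νbar) (hμbar : IsValAdd μbar)
    (hextL : ∀ x : L, μbar (Polynomial.C x) = νbar x)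
    (hδ : μbar (X - C a) = (δ : WithTop Γ)) {θ : L}
    (h : μbar (X - C θ) < (δ : WithTop Γ)) :
    νbar (a - θ) = μbar (X - C θ) := by
  have hm := close_min hνbar hμbar hextL hδ h.le
  rcases le_or_gt (νbar (a - θ)) (δ : WithTop Γ) with h3 | h3
  · rwa [min_eq_left h3] at hm
  · rw [min_eq_right h3.le] at hm
    exact absurd hm.symm (ne_of_lt h)

/-- `pairVal ≤ μbar`. -/
theorem pv_le_mubar (hνbar : IsValAdd νbar) (hμbar : IsValAdd μbar)
    (hextL : ∀ x : L, μbar (Polynomial.C x) = νbar x)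
    (hδ : μbar (X - C a) = (δ : WithTop Γ)) (g : L[X]) :
    pairVal νbar a δ g ≤ μbar g := by
  have hexp : g = ∑ i ∈ Finset.range ((taylor a g).natDegree + 1),
      C ((taylor a g).coeff i) * (X - C a) ^ i := by
    conv_lhs => rw [← sum_taylor_eq g a]
    rw [sum_over_range]
    intro n; rw [map_zero, zero_mul]
  conv_rhs => rw [hexp]
  refine vle_sum hμbar _ _ _ fun i _ => ?_
  rw [hμbar.map_mul, hextL, vpow hμbar, hδ, ← wcoe_nsmul]
  exact pv_le_coeff δ a hνbar g i

end Main
end PVAux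
namespace PVAux
section Core
variable {K L Γ : Type*} [Field K] [Field L] [Algebra K L] [IsAlgClosed L]
  [Algebra.IsAlgebraic K L] [AddCommGroup Γ] [LinearOrder Γ] [IsOrderedAddMonoid Γ]
variable {μ : K[X] → WithTop Γ} {νbar : L → WithTop Γ} {μbar : L[X] → WithTop Γ}
variable {Q : K[X]} {a : L} {δ : Γ}

set_option linter.unusedSectionVars false

theorem part1 (hνbar : IsValAdd νbar) (hμbar : IsValAdd μbar)
    (hextL : ∀ x : L, μbar (Polynomial.C x) = νbar x)
    (hres : ∀ f : K[X], μbar (f.map (algebraMap K L)) = μ f)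
    (hQm : Q.Monic)
    (hopt : ∀ b : L, aeval b Q = 0 → μbar (X - C b) ≤ μbar (X - C a))
    (hδ : μbar (X - C a) = (δ : WithTop Γ)) :
    pairVal νbar a δ (Q.map (algebraMap K L)) = μ Q := by
  set G := Q.map (algebraMap K L) with hG
  have hGm : G.Monic := hQm.map _
  have hfac : G = (G.roots.map fun b => X - C b).prod :=
    (IsAlgClosed.splits G).eq_prod_roots_of_monic hGm
  have hroot : ∀ b ∈ G.roots, pairVal νbar a δ (X - C b) = μbar (X - C b) := by
    intro b hb
    have hb0 : aeval b Q = 0 := by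
      have := isRoot_of_mem_roots hb
      rwa [IsRoot, hG, eval_map, ← aeval_def] at this
    have hle : μbar (X - C b) ≤ (δ : WithTop Γ) := (hopt b hb0).trans_eq hδ
    rw [pv_linear δ a hνbar b, close_min hνbar hμbar hextL hδ hle]
  conv_lhs => rw [hfac]
  rw [pv_multiset δ a hνbar, Multiset.map_congr rfl hroot, ← mu_prod_multiset hμbar, ← hfac,
    hG, hres]

theorem star (hμ : IsValAdd μ) (hνbar : IsValAdd νbar) (hμbar : IsValAdd μbar)
    (hextL : ∀ x : L, μbar (Polynomial.C x) = νbar x)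
    (hres : ∀ f : K[X], μbar (f.map (algebraMap K L)) = μ f)
    (hQ : IsABKP μ Q)
    (hopt : ∀ b : L, aeval b Q = 0 → μbar (X - C b) ≤ μbar (X - C a))
    (hδ : μbar (X - C a) = (δ : WithTop Γ)) :
    ∀ f : K[X], f ≠ 0 → f.degree < Q.degree → ∀ i, 1 ≤ i →
      μ f < μ (hasseDeriv i f) + ((i • δ : Γ) : WithTop Γ) := by
  intro f hf hdeg i hi
  obtain ⟨j, hj1, hjtop, hlt⟩ := hQ.2 f hf hdeg
  have hkey : μ Q ≤ μ (hasseDeriv j Q) + ((j • δ : Γ) : WithTop Γ) := by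
    have h1 : pairVal νbar a δ (Q.map (algebraMap K L)) ≤
        pairVal νbar a δ (hasseDeriv j (Q.map (algebraMap K L))) + ((j • δ : Γ) : WithTop Γ) :=
      pv_hasse δ a hνbar _ j
    have h2 : pairVal νbar a δ (hasseDeriv j (Q.map (algebraMap K L))) ≤ μ (hasseDeriv j Q) := by
      rw [← hres (hasseDeriv j Q), hasse_map]
      exact pv_le_mubar hνbar hμbar hextL hδ _
    calc μ Q = pairVal νbar a δ (Q.map (algebraMap K L)) :=
          (part1 hνbar hμbar hextL hres hQ.1 hopt hδ).symm
    _ ≤ pairVal νbar a δ (hasseDeriv j (Q.map (algebraMap K L))) + ((j • δ : Γ) : WithTop Γ) := h1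
    _ ≤ μ (hasseDeriv j Q) + ((j • δ : Γ) : WithTop Γ) := add_le_add_left h2 _
  by_contra hcon
  push_neg at hcon
  have h1 : j • (μ (hasseDeriv i f) + ((i • δ : Γ) : WithTop Γ)) ≤ j • μ f :=
    wnsmul_le_wnsmul j hcon
  have h2 : i • μ Q ≤ i • (μ (hasseDeriv j Q) + ((j • δ : Γ) : WithTop Γ)) :=
    wnsmul_le_wnsmul i hkey
  have h3 := hlt i hi
  have h4 : i • (μ (hasseDeriv j Q) + ((j • δ : Γ) : WithTop Γ))
      = i • μ (hasseDeriv j Q) + j • (((i • δ : Γ) : WithTop Γ)) := by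
    rw [nsmul_add]
    congr 1
    rw [← wcoe_nsmul i (j • δ), ← wcoe_nsmul j (i • δ), smul_comm]
  have h5 : i • μ Q + j • μ (hasseDeriv i f) ≤ i • μ (hasseDeriv j Q) + j • μ f := by
    calc i • μ Q + j • μ (hasseDeriv i f)
        ≤ (i • μ (hasseDeriv j Q) + j • (((i • δ : Γ) : WithTop Γ))) + j • μ (hasseDeriv i f) :=
          add_le_add_left (h2.trans_eq h4) _
    _ = i • μ (hasseDeriv j Q) + j • (μ (hasseDeriv i f) + ((i • δ : Γ) : WithTop Γ)) := by
          rw [add_assoc, ← nsmul_add, add_comm (((i • δ : Γ) : WithTop Γ))]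
    _ ≤ i • μ (hasseDeriv j Q) + j • μ f := add_le_add_right h1 _
  have h6 := lt_of_lt_of_le h3 h5
  rw [add_comm (i • μ (hasseDeriv j Q))] at h6
  exact lt_irrefl _ ((add_comm (j • μ f) (i • μ (hasseDeriv j Q))) ▸ h6)

theorem Rp (hμ : IsValAdd μ) (hνbar : IsValAdd νbar) (hμbar : IsValAdd μbar)
    (hextL : ∀ x : L, μbar (Polynomial.C x) = νbar x)
    (hres : ∀ f : K[X], μbar (f.map (algebraMap K L)) = μ f)
    (hQ : IsABKP μ Q)
    (hopt : ∀ b : L, aeval b Q = 0 → μbar (X - C b) ≤ μbar (X - C a))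
    (hδ : μbar (X - C a) = (δ : WithTop Γ)) :
    ∀ n : ℕ, ∀ g : K[X], g ≠ 0 → g.natDegree ≤ n → g.degree < Q.degree →
      ((∀ θ ∈ (g.map (algebraMap K L)).roots, μbar (X - C θ) < (δ : WithTop Γ)) ∧
       ∀ c : L, (δ : WithTop Γ) ≤ μbar (X - C c) →
         μ g ≤ νbar ((g.map (algebraMap K L)).eval c)) := by
  intro n
  induction n using Nat.strong_induction_on with
  | _ n IH =>
  intro g hg hgn hgd
  have parti : ∀ θ ∈ (g.map (algebraMap K L)).roots, μbar (X - C θ) < (δ : WithTop Γ) := by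
    intro θ hθ
    by_contra hcon
    push_neg at hcon
    have hroot : aeval θ g = 0 := by
      have := isRoot_of_mem_roots hθ
      rwa [IsRoot, eval_map, ← aeval_def] at this
    have hint : IsIntegral K θ := Algebra.IsIntegral.isIntegral θ
    set h := minpoly K θ with hh
    have hh0 : h ≠ 0 := minpoly.ne_zero hint
    have hdvd : h ∣ g := minpoly.dvd K θ hroot
    have hdegh : h.degree ≤ g.degree := degree_le_of_dvd hdvd hg
    have hdegQ : h.degree < Q.degree := lt_of_le_of_lt hdegh hgd
    have hnd1 : 0 < h.natDegree := minpoly.natDegree_pos hint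
    have hndn : h.natDegree ≤ n := le_trans (natDegree_le_natDegree hdegh) hgn
    set H := h.map (algebraMap K L) with hH
    have hHroot : H.eval θ = 0 := by
      rw [hH, eval_map, ← aeval_def]; exact minpoly.aeval K θ
    have hexp : H = ∑ i ∈ Finset.range ((taylor θ H).natDegree + 1),
        C ((taylor θ H).coeff i) * (X - C θ) ^ i := by
      conv_lhs => rw [← sum_taylor_eq H θ]
      rw [sum_over_range]
      intro m; rw [map_zero, zero_mul]
    have hterm : ∀ i ∈ Finset.range ((taylor θ H).natDegree + 1),
        μ h < μbar (C ((taylor θ H).coeff i) * (X - C θ) ^ i) := by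
      intro i _
      rcases Nat.eq_zero_or_pos i with rfl | hi
      · rw [taylor_coeff_zero, hHroot, map_zero, zero_mul, hμbar.map_zero]
        exact lt_top_iff_ne_top.mpr (vne_top hμ hh0)
      · have hco : (taylor θ H).coeff i = ((hasseDeriv i h).map (algebraMap K L)).eval θ := by
          rw [taylor_coeff, hasse_map]
        rw [hμbar.map_mul, hextL, vpow hμbar, hco]
        rcases eq_or_ne (hasseDeriv i h) 0 with h0 | h0
        · rw [h0, Polynomial.map_zero, eval_zero, hνbar.map_zero, top_add]
          exact lt_top_iff_ne_top.mpr (vne_top hμ hh0)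
        · have hdlt : (hasseDeriv i h).degree < h.degree := hasse_degree_lt hh0 hi h0
          have hsmall : μ (hasseDeriv i h)
              ≤ νbar (((hasseDeriv i h).map (algebraMap K L)).eval θ) := by
            have hnat : (hasseDeriv i h).natDegree < h.natDegree :=
              natDegree_lt_natDegree h0 hdlt
            have hstmt := IH (n - 1) (by omega) (hasseDeriv i h) h0 (by omega)
              (lt_trans hdlt hdegQ)
            exact hstmt.2 θ hcon
          calc μ h < μ (hasseDeriv i h) + ((i • δ : Γ) : WithTop Γ) :=
                star hμ hνbar hμbar hextL hres hQ hopt hδ h hh0 hdegQ i hi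
          _ ≤ νbar (((hasseDeriv i h).map (algebraMap K L)).eval θ) + i • μbar (X - C θ) := by
                refine add_le_add hsmall ?_
                rw [wcoe_nsmul]
                exact wnsmul_le_wnsmul i (hδ ▸ hcon)
    have hcontr : μ h < μ h := by
      conv_rhs => rw [← hres h, ← hH, hexp]
      exact vlt_sum hμbar _ _ _ (vne_top hμ hh0) hterm
    exact lt_irrefl _ hcontr
  refine ⟨parti, ?_⟩
  intro c hc
  rw [nubar_eval_roots hνbar _ c, ← hres g, mubar_eq_roots hμbar hextL]
  refine add_le_add_right (Multiset.sum_map_le_sum_map _ _ fun θ hθ => ?_) _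
  have hlt := parti θ hθ
  have hd := dist_min hνbar hμbar hextL c θ
  rwa [min_eq_left (le_trans hlt.le hc)] at hd

theorem evalE (hμ : IsValAdd μ) (hνbar : IsValAdd νbar) (hμbar : IsValAdd μbar)
    (hextL : ∀ x : L, μbar (Polynomial.C x) = νbar x)
    (hres : ∀ f : K[X], μbar (f.map (algebraMap K L)) = μ f)
    (hQ : IsABKP μ Q)
    (hopt : ∀ b : L, aeval b Q = 0 → μbar (X - C b) ≤ μbar (X - C a))
    (hδ : μbar (X - C a) = (δ : WithTop Γ)) {r : K[X]} (hr : r ≠ 0)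
    (hdeg : r.degree < Q.degree) : νbar ((r.map (algebraMap K L)).eval a) = μ r := by
  have hroots := (Rp hμ hνbar hμbar hextL hres hQ hopt hδ r.natDegree r hr le_rfl hdeg).1
  rw [nubar_eval_roots hνbar _ a, ← hres r, mubar_eq_roots hμbar hextL]
  congr 1
  exact congrArg Multiset.sum
    (Multiset.map_congr rfl fun θ hθ => close_eq hνbar hμbar hextL hδ (hroots θ hθ))

theorem stepA (hμ : IsValAdd μ) (hνbar : IsValAdd νbar) (hμbar : IsValAdd μbar)
    (hextL : ∀ x : L, μbar (Polynomial.C x) = νbar x)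
    (hres : ∀ f : K[X], μbar (f.map (algebraMap K L)) = μ f)
    (hQ : IsABKP μ Q)
    (hopt : ∀ b : L, aeval b Q = 0 → μbar (X - C b) ≤ μbar (X - C a))
    (hδ : μbar (X - C a) = (δ : WithTop Γ)) {r : K[X]} (hr : r ≠ 0)
    (hdeg : r.degree < Q.degree) :
    pairVal νbar a δ (r.map (algebraMap K L)) = μ r := by
  refine le_antisymm ((pv_le_eval δ a hνbar _).trans_eq
    (evalE hμ hνbar hμbar hextL hres hQ hopt hδ hr hdeg)) ?_
  rw [pairVal]
  refine Finset.le_inf fun i _ => ?_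
  rcases Nat.eq_zero_or_pos i with rfl | hi
  · rw [taylor_coeff_zero, zero_smul, WithTop.coe_zero, add_zero,
      evalE hμ hνbar hμbar hextL hres hQ hopt hδ hr hdeg]
  · have hco : (taylor a (r.map (algebraMap K L))).coeff i
        = ((hasseDeriv i r).map (algebraMap K L)).eval a := by
      rw [taylor_coeff, hasse_map]
    rcases eq_or_ne (hasseDeriv i r) 0 with h0 | h0
    · rw [hco, h0, Polynomial.map_zero, eval_zero, hνbar.map_zero, top_add]; exact le_top
    · have hdr : (hasseDeriv i r).degree < Q.degree := lt_trans (hasse_degree_lt hr hi h0) hdeg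
      calc μ r ≤ μ (hasseDeriv i r) + ((i • δ : Γ) : WithTop Γ) :=
            (star hμ hνbar hμbar hextL hres hQ hopt hδ r hr hdeg i hi).le
      _ = νbar (((hasseDeriv i r).map (algebraMap K L)).eval a) + ((i • δ : Γ) : WithTop Γ) := by
            rw [evalE hμ hνbar hμbar hextL hres hQ hopt hδ h0 hdr]
      _ = νbar ((taylor a (r.map (algebraMap K L))).coeff i) + ((i • δ : Γ) : WithTop Γ) := by
            rw [hco]

end Core
end PVAux
namespace PVAux
section Trunc
variable {K Γ : Type*} [Field K] [AddCommGroup Γ] [LinearOrder Γ] [IsOrderedAddMonoid Γ]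
variable {μ : K[X] → WithTop Γ} {Q : K[X]}

theorem qCoeff_zero' (Q : K[X]) : ∀ i, qCoeff Q i (0 : K[X]) = 0
  | 0 => by show (0 : K[X]) %ₘ Q = 0; rw [zero_modByMonic]
  | (i + 1) => by
      show qCoeff Q i ((0 : K[X]) /ₘ Q) = 0
      rw [zero_divByMonic]
      exact qCoeff_zero' Q i

theorem qCoeff_succ (Q : K[X]) (j : ℕ) (f : K[X]) : qCoeff Q (j + 1) f = qCoeff Q j (f /ₘ Q) :=
  rfl

theorem qCoeff_of_natDegree_lt (hQm : Q.Monic) (hQd : 0 < Q.degree) :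
    ∀ j (g : K[X]), g.natDegree < j → qCoeff Q j g = 0 := by
  intro j
  induction j with
  | zero => intro g h; omega
  | succ j ih =>
    intro g _
    rw [qCoeff_succ]
    rcases eq_or_ne g 0 with rfl | hg
    · rw [zero_divByMonic]; exact qCoeff_zero' Q j
    rcases eq_or_ne (g /ₘ Q) 0 with h0 | h0
    · rw [h0]; exact qCoeff_zero' Q j
    · refine ih (g /ₘ Q) ?_
      have := natDegree_lt_natDegree h0 (degree_divByMonic_lt g Q hg hQd)
      omega

theorem trunc_zero (hμ : IsValAdd μ) : trunc μ Q 0 = ⊤ := by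
  simp only [trunc, natDegree_zero, zero_add, Finset.range_one, Finset.inf_singleton]
  rw [qCoeff_zero' Q 0, zero_mul, hμ.map_zero]

theorem trunc_of_deg_lt (hμ : IsValAdd μ) (hQm : Q.Monic) {f : K[X]}
    (hdeg : f.degree < Q.degree) : trunc μ Q f = μ f := by
  have h0 : qCoeff Q 0 f = f := (modByMonic_eq_self_iff hQm).mpr hdeg
  have hq0 : f /ₘ Q = 0 := (divByMonic_eq_zero_iff hQm).mpr hdeg
  simp only [trunc]
  refine le_antisymm ?_ (Finset.le_inf fun i _ => ?_)
  · refine le_trans (Finset.inf_le (Finset.mem_range.mpr (Nat.succ_pos _))) ?_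
    rw [h0, pow_zero, mul_one]
  · rcases Nat.eq_zero_or_pos i with rfl | hi2
    · rw [h0, pow_zero, mul_one]
    · obtain ⟨j, rfl⟩ : ∃ j, i = j + 1 := ⟨i - 1, by omega⟩
      rw [qCoeff_succ, hq0, qCoeff_zero' Q j, zero_mul, hμ.map_zero]
      exact le_top

theorem trunc_rec (hμ : IsValAdd μ) (hQm : Q.Monic) (hQd : 0 < Q.degree) {f : K[X]}
    (hf : f ≠ 0) (hq : f /ₘ Q ≠ 0) :
    trunc μ Q f = min (μ (f %ₘ Q)) (μ Q + trunc μ Q (f /ₘ Q)) := by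
  have hnq : (f /ₘ Q).natDegree < f.natDegree :=
    natDegree_lt_natDegree hq (degree_divByMonic_lt f Q hf hQd)
  simp only [trunc]
  refine le_antisymm (le_min ?_ ?_) (Finset.le_inf fun i _ => ?_)
  · refine le_trans (Finset.inf_le (Finset.mem_range.mpr (Nat.succ_pos _))) ?_
    show μ (f %ₘ Q * Q ^ 0) ≤ μ (f %ₘ Q)
    rw [pow_zero, mul_one]
  · obtain ⟨j, hjmem, hjeq⟩ := Finset.exists_mem_eq_inf
      (Finset.range ((f /ₘ Q).natDegree + 1)) (Finset.nonempty_range_iff.mpr (Nat.succ_ne_zero _))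
      (fun i => μ (qCoeff Q i (f /ₘ Q) * Q ^ i))
    have hjle : j + 1 ≤ f.natDegree := by
      have := Finset.mem_range.mp hjmem; omega
    refine le_trans (Finset.inf_le (Finset.mem_range.mpr
      (show j + 1 < f.natDegree + 1 by omega))) ?_
    rw [qCoeff_succ, pow_succ, ← mul_assoc, hμ.map_mul, ← hjeq, add_comm]
  · rcases Nat.eq_zero_or_pos i with rfl | hi2
    · refine le_trans (min_le_left _ _) ?_
      show μ (f %ₘ Q) ≤ μ (f %ₘ Q * Q ^ 0)
      rw [pow_zero, mul_one]
    · obtain ⟨j, rfl⟩ : ∃ j, i = j + 1 := ⟨i - 1, by omega⟩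
      rw [qCoeff_succ, pow_succ, ← mul_assoc, hμ.map_mul]
      refine le_trans (min_le_right _ _) ?_
      rw [add_comm (μ Q)]
      refine add_le_add_left ?_ (μ Q)
      rcases le_or_gt j (f /ₘ Q).natDegree with hj | hj
      · exact Finset.inf_le (Finset.mem_range.mpr (show j < (f /ₘ Q).natDegree + 1 by omega))
      · rw [qCoeff_of_natDegree_lt hQm hQd j _ hj, zero_mul, hμ.map_zero]
        exact le_top

end Trunc

section Core2
variable {K L Γ : Type*} [Field K] [Field L] [Algebra K L] [IsAlgClosed L]
  [Algebra.IsAlgebraic K L] [AddCommGroup Γ] [LinearOrder Γ] [IsOrderedAddMonoid Γ]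
variable {μ : K[X] → WithTop Γ} {νbar : L → WithTop Γ} {μbar : L[X] → WithTop Γ}
variable {Q : K[X]} {a : L} {δ : Γ}

set_option linter.unusedSectionVars false

theorem degQ_pos (hQm : Q.Monic) (ha : aeval a Q = 0) : 0 < Q.degree := by
  by_contra hc
  push_neg at hc
  have h0 : Q.natDegree ≤ 0 := natDegree_le_iff_degree_le.mpr hc
  have h1 : Q = 1 := hQm.natDegree_eq_zero.mp (by omega)
  rw [h1] at ha
  simp at ha

theorem part2 (hμ : IsValAdd μ) (hνbar : IsValAdd νbar) (hμbar : IsValAdd μbar)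
    (hextL : ∀ x : L, μbar (Polynomial.C x) = νbar x)
    (hres : ∀ f : K[X], μbar (f.map (algebraMap K L)) = μ f)
    (hQ : IsABKP μ Q) (ha : aeval a Q = 0)
    (hopt : ∀ b : L, aeval b Q = 0 → μbar (X - C b) ≤ μbar (X - C a))
    (hδ : μbar (X - C a) = (δ : WithTop Γ)) :
    ∀ n : ℕ, ∀ f : K[X], f.natDegree ≤ n →
      pairVal νbar a δ (f.map (algebraMap K L)) = trunc μ Q f := by
  have hQm := hQ.1
  have hQd : 0 < Q.degree := degQ_pos hQm ha
  intro n
  induction n using Nat.strong_induction_on with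
  | _ n IH =>
  intro f hfn
  rcases eq_or_ne f 0 with rfl | hf
  · rw [Polynomial.map_zero, pv_zero δ a hνbar, trunc_zero hμ]
  rcases eq_or_ne (f /ₘ Q) 0 with hq0 | hq0
  · have hdeg : f.degree < Q.degree := (divByMonic_eq_zero_iff hQm).mp hq0
    rw [stepA hμ hνbar hμbar hextL hres hQ hopt hδ hf hdeg, trunc_of_deg_lt hμ hQm hdeg]
  · have hfe : f = f %ₘ Q + Q * (f /ₘ Q) := (modByMonic_add_div f Q).symm
    have hnq : (f /ₘ Q).natDegree < f.natDegree :=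
      natDegree_lt_natDegree hq0 (degree_divByMonic_lt f Q hf hQd)
    have ihq : pairVal νbar a δ ((f /ₘ Q).map (algebraMap K L)) = trunc μ Q (f /ₘ Q) :=
      IH (n - 1) (by omega) (f /ₘ Q) (by omega)
    have hm2 : pairVal νbar a δ ((Q * (f /ₘ Q)).map (algebraMap K L))
        = μ Q + trunc μ Q (f /ₘ Q) := by
      rw [Polynomial.map_mul, pv_mul δ a hνbar, ihq,
        part1 hνbar hμbar hextL hres hQm hopt hδ]
    have htr : trunc μ Q f = min (μ (f %ₘ Q)) (μ Q + trunc μ Q (f /ₘ Q)) :=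
      trunc_rec hμ hQm hQd hf hq0
    have hfmap : f.map (algebraMap K L) = (f %ₘ Q).map (algebraMap K L)
        + (Q * (f /ₘ Q)).map (algebraMap K L) := by
      conv_lhs => rw [hfe]
      rw [Polynomial.map_add]
    rcases eq_or_ne (f %ₘ Q) 0 with hr0 | hr0
    · have : f = Q * (f /ₘ Q) := by
        conv_lhs => rw [hfe]
        rw [hr0, zero_add]
      rw [htr, hr0, hμ.map_zero]
      conv_lhs => rw [this]
      rw [hm2]
      exact (min_eq_right le_top).symm
    · have hrd : (f %ₘ Q).degree < Q.degree := degree_modByMonic_lt f hQm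
      have hstep : pairVal νbar a δ ((f %ₘ Q).map (algebraMap K L)) = μ (f %ₘ Q) :=
        stepA hμ hνbar hμbar hextL hres hQ hopt hδ hr0 hrd
      have hEr : νbar (((f %ₘ Q).map (algebraMap K L)).eval a) = μ (f %ₘ Q) :=
        evalE hμ hνbar hμbar hextL hres hQ hopt hδ hr0 hrd
      have hge : min (μ (f %ₘ Q)) (μ Q + trunc μ Q (f /ₘ Q))
          ≤ pairVal νbar a δ (f.map (algebraMap K L)) := by
        rw [hfmap]
        refine le_trans (le_of_eq ?_) (pv_add_min δ a hνbar _ _)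
        rw [hstep, hm2]
      rw [htr]
      rcases le_or_gt (μ (f %ₘ Q)) (μ Q + trunc μ Q (f /ₘ Q)) with hc | hc
      · refine le_antisymm ?_ hge
        have heval : (f.map (algebraMap K L)).eval a
            = ((f %ₘ Q).map (algebraMap K L)).eval a := by
          rw [hfmap, eval_add, Polynomial.map_mul, eval_mul]
          have hQa : ((Q.map (algebraMap K L))).eval a = 0 := by
            rw [eval_map, ← aeval_def]; exact ha
          rw [hQa, zero_mul, add_zero]
        have hle := (pv_le_eval δ a hνbar (f.map (algebraMap K L)))
        rw [heval, hEr] at hle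
        exact hle.trans_eq (min_eq_left hc).symm
      · have hlt : pairVal νbar a δ ((Q * (f /ₘ Q)).map (algebraMap K L))
            < pairVal νbar a δ ((f %ₘ Q).map (algebraMap K L)) := by
          rw [hstep, hm2]; exact hc
        have : pairVal νbar a δ (f.map (algebraMap K L))
            = pairVal νbar a δ ((Q * (f /ₘ Q)).map (algebraMap K L)) := by
          rw [hfmap, add_comm]
          exact pv_add_eq δ a hνbar hlt
        rw [this, hm2]
        exact (min_eq_right hc.le).symm

end Core2
end PVAux

/-- for an abstract key polynomial `Q` with optimising root `a` and
`δ = μ̄(X - a)`, one has `μ̄_{X-a}(Q) = μ(Q)`, and the truncation `μ̄_{X-a}`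
restricted to `K[X]` equals `μ_Q`. -/
theorem pairVal_restricts_to_trunc {K L Γ : Type*} [Field K] [Field L] [Algebra K L]
    [IsAlgClosed L] [Algebra.IsAlgebraic K L] [AddCommGroup Γ] [LinearOrder Γ] [IsOrderedAddMonoid Γ]
    (ν : K → WithTop Γ) (μ : Polynomial K → WithTop Γ)
    (νbar : L → WithTop Γ) (μbar : Polynomial L → WithTop Γ)
    (hν : IsValAdd ν) (hμ : IsValAdd μ) (hνbar : IsValAdd νbar) (hμbar : IsValAdd μbar)
    (hextK : ∀ c : K, μ (Polynomial.C c) = ν c)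
    (hextL : ∀ x : L, μbar (Polynomial.C x) = νbar x)
    (hres : ∀ f : Polynomial K, μbar (f.map (algebraMap K L)) = μ f)
    (Q : Polynomial K) (hQ : IsABKP μ Q)
    (a : L) (ha : Polynomial.aeval a Q = 0)
    (hopt : ∀ b : L, Polynomial.aeval b Q = 0 →
      μbar (Polynomial.X - Polynomial.C b) ≤ μbar (Polynomial.X - Polynomial.C a))
    (δ : Γ) (hδ : μbar (Polynomial.X - Polynomial.C a) = (δ : WithTop Γ)) :
    pairVal νbar a δ (Q.map (algebraMap K L)) = μ Q ∧
      ∀ f : Polynomial K, pairVal νbar a δ (f.map (algebraMap K L)) = trunc μ Q f :=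
  ⟨PVAux.part1 hνbar hμbar hextL hres hQ.1 hopt hδ,
   fun f => PVAux.part2 hμ hνbar hμbar hextL hres hQ ha hopt hδ f.natDegree f le_rfl⟩
end
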